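/- arXiv:1407.7279 — 4 statements merged into one kernel-verified Lean document; each statement's English description precedes it below -/
import Mathlib

section
/- Let 𝒢 be a TVG and s a vertex such that a covering journey from s at time 0 exists and the minimal arrival time among covering journeys is attained. Then there exists an optimal solution J with the following property: for every vertex v having degree exactly 2 in the subgraph of the underlying graph induced by the edges of the underlying walk of J, the journey J never turns around at v; that is, J never traverses an edge (u,v) into v and then traverses (v,u) as the very next edge of the journey. -/
/-- A time-varying graph (TVG): an underlying simple graph together with a presence
function telling when each (directed rendering of an) edge is available; every edge
takes one time step to cross. -/
structure TVG (V : Type) where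
  G : SimpleGraph V
  avail : V → V → ℕ → Prop

namespace TVG

variable {V : Type}

/-- A step of a journey: traverse the edge from `x.1` to `x.2.1`, starting at time
`x.2.2` and arriving at time `x.2.2 + 1`. -/
abbrev Step (V : Type) := V × V × ℕ

/-- Consecutive steps of a journey: the next step starts where the previous one ended,
at a strictly later time (waiting in between is allowed). -/
def Linked (a b : Step V) : Prop := b.1 = a.2.1 ∧ a.2.2 + 1 ≤ b.2.2

/-- A journey: each step crosses an edge of the underlying graph that is available at
that time, and consecutive steps are linked. -/
def IsJourney (𝒢 : TVG V) (J : List (Step V)) : Prop :=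
  (∀ x ∈ J, 𝒢.G.Adj x.1 x.2.1 ∧ 𝒢.avail x.1 x.2.1 x.2.2) ∧ J.Chain' Linked

/-- The journey starts at vertex `u`. -/
def startsAt (J : List (Step V)) (u : V) : Prop := ∀ x ∈ J.head?, x.1 = u

/-- The journey departs at or after time `t`. -/
def departsAfter (J : List (Step V)) (t : ℕ) : Prop := ∀ x ∈ J.head?, t ≤ x.2.2

/-- Departure date of a journey started at time `t0`. -/
def departure (J : List (Step V)) (t0 : ℕ) : ℕ := (J.head?).elim t0 fun x => x.2.2

/-- Arrival date of a journey started at time `t0`. -/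
def arrival (J : List (Step V)) (t0 : ℕ) : ℕ := (J.getLast?).elim t0 fun x => x.2.2 + 1

/-- Final vertex of a journey started at vertex `s`. -/
def endAt (J : List (Step V)) (s : V) : V := (J.getLast?).elim s fun x => x.2.1

/-- The journey, started at `s`, visits (covers) vertex `v`. -/
def visits (J : List (Step V)) (s v : V) : Prop := v = s ∨ ∃ x ∈ J, x.2.1 = v

/-- A covering journey from `s` starting at time `0`: a journey that starts at `s`
and visits every vertex. -/
def IsCoveringFrom (𝒢 : TVG V) (J : List (Step V)) (s : V) : Prop :=
  𝒢.IsJourney J ∧ startsAt J s ∧ ∀ v : V, visits J s v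

/-- Class `R` (recurrent edges): connected underlying graph, lifetime `ℕ`, and every
edge is available at arbitrarily late times. -/
def ClassR (𝒢 : TVG V) : Prop :=
  𝒢.G.Connected ∧ ∀ u v, 𝒢.G.Adj u v → ∀ t, ∃ t', t < t' ∧ 𝒢.avail u v t'

/-- Class `B` (time-bounded recurrent edges): every edge is available at some time in
`[t, t + Δ)` for every `t`. -/
def ClassB (𝒢 : TVG V) (Δ : ℕ) : Prop :=
  𝒢.G.Connected ∧ ∀ u v, 𝒢.G.Adj u v → ∀ t, ∃ t', t ≤ t' ∧ t' < t + Δ ∧ 𝒢.avail u v t'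

/-- Class `P` (periodic edges): the presence function is periodic with period `p`. -/
def ClassP (𝒢 : TVG V) (p : ℕ) : Prop :=
  𝒢.G.Connected ∧ ∀ u v t, 𝒢.avail u v t ↔ 𝒢.avail u v (t + p)

/-- Presence function obtained by running the given (possibly time-dependent) edge
relations for the given durations, one block after another, starting at time `0`;
each block relation receives the local time within its block. -/
def schedAvail : List ((V → V → ℕ → Prop) × ℕ) → V → V → ℕ → Prop
  | [], _, _, _ => False
  | (r, d) :: rest, u, v, t => if t < d then r u v t else schedAvail rest u v (t - d)

end TVG

open TVG

/-- The edge-induced subgraph of a journey in the underlying graph: `u` and `v` are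
adjacent iff some step of the journey traverses the edge between them. -/
def journeyGraph {V : Type} (J : List (TVG.Step V)) : SimpleGraph V :=
  SimpleGraph.fromRel (fun u v => ∃ x ∈ J, x.1 = u ∧ x.2.1 = v)

private lemma chain'_head_or_pred {α : Type*} {R : α → α → Prop} :
    ∀ {l : List α}, l.Chain' R → ∀ {x}, x ∈ l → l.head? = some x ∨ ∃ p ∈ l, R p x
  | [], _, _, hx => absurd hx List.not_mem_nil
  | c :: t, h, x, hx => by
      rcases List.mem_cons.1 hx with rfl | hx
      · exact Or.inl rfl
      · rcases chain'_head_or_pred h.tail hx with h1 | ⟨p, hp, hpx⟩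
        · exact Or.inr ⟨c, List.mem_cons_self, (List.isChain_cons.1 h).1 _ h1⟩
        · exact Or.inr ⟨p, List.mem_cons_of_mem _ hp, hpx⟩

private lemma shrink {V : Type} (𝒢 : TVG V) (s v : V) (l₁ l₂ : List (Step V))
    (a b : Step V)
    (hcov : 𝒢.IsCoveringFrom (l₁ ++ a :: b :: l₂) s)
    (hdeg : {w | (journeyGraph (l₁ ++ a :: b :: l₂)).Adj v w}.ncard = 2)
    (hv : a.2.1 = v) (hu : b.2.1 = a.1) :
    𝒢.IsCoveringFrom (l₁ ++ l₂) s ∧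
      arrival (l₁ ++ l₂) 0 ≤ arrival (l₁ ++ a :: b :: l₂) 0 := by
  obtain ⟨⟨hedge, hchain⟩, hstart, hvisit⟩ := hcov
  unfold List.Chain' at hchain
  rw [List.isChain_append] at hchain
  obtain ⟨hc1, hc2, hlink⟩ := hchain
  obtain ⟨hab, hc2'⟩ := List.isChain_cons_cons.1 hc2
  obtain ⟨hbl, hcl2⟩ := List.isChain_cons.1 hc2'
  have haJ : a ∈ l₁ ++ a :: b :: l₂ := by simp
  have hbJ : b ∈ l₁ ++ a :: b :: l₂ := by simp
  have huv : a.1 ≠ v := by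
    have := (hedge a haJ).1.ne
    rwa [hv] at this
  have hb1 : b.1 = v := by rw [hab.1, hv]
  -- the shortened journey is a journey
  have hjour : 𝒢.IsJourney (l₁ ++ l₂) := by
    constructor
    · intro x hx
      apply hedge
      rcases List.mem_append.1 hx with h | h
      · exact List.mem_append_left _ h
      · exact List.mem_append_right _ (by simp [h])
    · unfold List.Chain'
      rw [List.isChain_append]
      refine ⟨hc1, hcl2, ?_⟩
      intro x hx y hy
      have hxa : Linked x a := hlink x hx a rfl
      have hby : Linked b y := hbl y hy
      refine ⟨?_, ?_⟩
      · rw [hby.1, hu, hxa.1]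
      · have := hxa.2; have := hab.2; have := hby.2; omega
  -- it starts at s
  have hstart' : startsAt (l₁ ++ l₂) s := by
    intro x hx
    cases l₁ with
    | cons c t =>
        apply hstart
        simpa using hx
    | nil =>
        simp only [List.nil_append] at hx hbl
        have hs : a.1 = s := hstart a rfl
        rw [(hbl x hx).1, hu, hs]
  -- coverage of a.1
  have hcov_u : visits (l₁ ++ l₂) s a.1 := by
    cases l₁ with
    | nil =>
        left
        exact hstart a rfl
    | cons c t =>
        right
        obtain ⟨p, hp⟩ : ∃ p, (c :: t).getLast? = some p :=
          ⟨(c :: t).getLast (by simp), List.getLast?_eq_getLast _⟩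
        have hpm : p ∈ c :: t := by
          rw [List.getLast?_eq_getLast (by simp), Option.some_inj] at hp
          rw [← hp]
          exact List.getLast_mem _
        have hpa : Linked p a := hlink p hp a rfl
        exact ⟨p, List.mem_append_left _ hpm, hpa.1.symm⟩
  -- coverage of v
  have hcov_v : visits (l₁ ++ l₂) s v := by
    -- v has a neighbor other than a.1 in the journey graph
    have hadj_u : (journeyGraph (l₁ ++ a :: b :: l₂)).Adj v a.1 := by
      rw [journeyGraph, SimpleGraph.fromRel_adj]
      exact ⟨Ne.symm huv, Or.inr ⟨a, haJ, rfl, hv⟩⟩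
    obtain ⟨x₁, x₂, hne, hset⟩ := Set.ncard_eq_two.1 hdeg
    have humem : a.1 ∈ ({x₁, x₂} : Set V) := hset ▸ hadj_u
    have : ∃ w, w ≠ a.1 ∧ (journeyGraph (l₁ ++ a :: b :: l₂)).Adj v w := by
      have hm2 : x₂ ∈ {w | (journeyGraph (l₁ ++ a :: b :: l₂)).Adj v w} := by
        rw [hset]; simp
      have hm1 : x₁ ∈ {w | (journeyGraph (l₁ ++ a :: b :: l₂)).Adj v w} := by
        rw [hset]; simp
      rcases humem with h | h
      · exact ⟨x₂, by rw [← h] at hne; exact hne.symm, hm2⟩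
      · rw [Set.mem_singleton_iff] at h
        exact ⟨x₁, by rw [← h] at hne; exact hne, hm1⟩
    obtain ⟨w, hwu, hadj⟩ := this
    rw [journeyGraph, SimpleGraph.fromRel_adj] at hadj
    obtain ⟨hvw, hrel⟩ := hadj
    rcases hrel with ⟨x, hxJ, hx1, hx2⟩ | ⟨x, hxJ, hx1, hx2⟩
    · -- x : v → w
      have hxa : x ≠ a := fun h => huv (by rw [← h, hx1])
      have hxb : x ≠ b := fun h => hwu (by rw [← hx2, h, hu])
      have hxmem : x ∈ l₁ ∨ x ∈ l₂ := by
        rcases List.mem_append.1 hxJ with h | h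
        · exact Or.inl h
        · rcases List.mem_cons.1 h with h | h
          · exact absurd h hxa
          · rcases List.mem_cons.1 h with h | h
            · exact absurd h hxb
            · exact Or.inr h
      rcases hxmem with hxm | hxm
      · rcases chain'_head_or_pred hc1 hxm with hh | ⟨p, hp, hpx⟩
        · -- x is the head of the whole journey, so v = s
          left
          have : x.1 = s := by
            apply hstart
            cases l₁ with
            | nil => simp at hxm
            | cons c t => simpa using hh
          rw [← hx1, this]
        · right
          exact ⟨p, List.mem_append_left _ hp, by rw [← hpx.1, hx1]⟩
      · rcases chain'_head_or_pred hcl2 hxm with hh | ⟨p, hp, hpx⟩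
        · -- x is head of l₂, so Linked b x, so x.1 = b.2.1 = a.1 ≠ v
          exact absurd (by rw [← hu, ← (hbl x hh).1, hx1] : a.1 = v) huv
        · right
          exact ⟨p, List.mem_append_right _ hp, by rw [← hpx.1, hx1]⟩
    · -- x : w → v
      have hxa : x ≠ a := fun h => hwu (by rw [← hx1, h])
      have hxb : x ≠ b := fun h => huv (by rw [← hu, ← h, hx2])
      have hxmem : x ∈ l₁ ∨ x ∈ l₂ := by
        rcases List.mem_append.1 hxJ with h | h
        · exact Or.inl h
        · rcases List.mem_cons.1 h with h | h
          · exact absurd h hxa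
          · rcases List.mem_cons.1 h with h | h
            · exact absurd h hxb
            · exact Or.inr h
      right
      rcases hxmem with hxm | hxm
      · exact ⟨x, List.mem_append_left _ hxm, hx2⟩
      · exact ⟨x, List.mem_append_right _ hxm, hx2⟩
  -- all vertices are covered
  have hvisit' : ∀ w : V, visits (l₁ ++ l₂) s w := by
    intro w
    rcases hvisit w with h | ⟨x, hxJ, hxw⟩
    · exact Or.inl h
    · rcases List.mem_append.1 hxJ with h | h
      · exact Or.inr ⟨x, List.mem_append_left _ h, hxw⟩
      · rcases List.mem_cons.1 h with h | h
        · rw [h] at hxw; rw [← hxw, hv]; exact hcov_v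
        · rcases List.mem_cons.1 h with h | h
          · rw [h] at hxw; rw [← hxw, hu]; exact hcov_u
          · exact Or.inr ⟨x, List.mem_append_right _ h, hxw⟩
  refine ⟨⟨hjour, hstart', hvisit'⟩, ?_⟩
  -- arrival does not increase
  cases l₂ with
  | cons c t =>
      obtain ⟨p, hp⟩ : ∃ p, (c :: t).getLast? = some p :=
        ⟨(c :: t).getLast (by simp), List.getLast?_eq_getLast _⟩
      have h1 : (l₁ ++ c :: t).getLast? = some p := by
        rw [List.getLast?_append, hp]; rfl
      have h2 : (l₁ ++ a :: b :: c :: t).getLast? = some p := by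
        rw [List.getLast?_append,
          show a :: b :: c :: t = [a, b] ++ c :: t from rfl,
          List.getLast?_append, hp]; rfl
      rw [arrival, arrival, h1, h2]
  | nil =>
      cases l₁ with
      | nil => simp [arrival]
      | cons c t =>
          obtain ⟨p, hp⟩ : ∃ p, (c :: t).getLast? = some p :=
            ⟨(c :: t).getLast (by simp), List.getLast?_eq_getLast _⟩
          have hpa : Linked p a := hlink p hp a rfl
          have h1 : (c :: t ++ ([] : List (Step V))).getLast? = some p := by
            rw [List.getLast?_append]; simp [hp]
          have h2 : (c :: t ++ a :: b :: ([] : List (Step V))).getLast? = some b := by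
            rw [List.getLast?_append]; simp
          rw [arrival, arrival, h1, h2]
          simp only [Option.elim]
          have := hpa.2; have := hab.2; omega

/-- Turning around lemma.  If a covering journey from `s` at time `0`
exists (so the minimal arrival time is attained), then there is an optimal solution `J`
that never turns around at any vertex `v` of degree exactly `2` in the edge-induced
subgraph of `J`: it never traverses an edge `(u,v)` into `v` and then immediately
traverses `(v,u)` as the very next edge. -/
theorem turning_around_lemma {V : Type} (𝒢 : TVG V) (s : V)
    (hex : ∃ J, 𝒢.IsCoveringFrom J s) :
    ∃ J, 𝒢.IsCoveringFrom J s ∧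
      (∀ J', 𝒢.IsCoveringFrom J' s → arrival J 0 ≤ arrival J' 0) ∧
      ∀ v : V, {w | (journeyGraph J).Adj v w}.ncard = 2 →
        J.Chain' (fun a b => ¬(a.2.1 = v ∧ b.2.1 = a.1)) := by
  classical
  obtain ⟨J₀, hJ₀⟩ := hex
  -- minimal arrival time m
  obtain ⟨m, ⟨Jm, hJm, hJma⟩, hmmin⟩ :=
    Nat.lt_wfRel.wf.has_min {n | ∃ J, 𝒢.IsCoveringFrom J s ∧ arrival J 0 = n}
      ⟨arrival J₀ 0, J₀, hJ₀, rfl⟩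
  -- among journeys with arrival m, one of minimal length
  obtain ⟨k, ⟨J, hJ, hJa, hJk⟩, hkmin⟩ :=
    Nat.lt_wfRel.wf.has_min
      {k | ∃ J, 𝒢.IsCoveringFrom J s ∧ arrival J 0 = m ∧ J.length = k}
      ⟨Jm.length, Jm, hJm, hJma, rfl⟩
  refine ⟨J, hJ, ?_, ?_⟩
  · intro J' hJ'
    rw [hJa]
    by_contra h
    exact hmmin (arrival J' 0) ⟨J', hJ', rfl⟩ (show arrival J' 0 < m by omega)
  · intro v hdeg
    unfold List.Chain'
    rw [List.isChain_iff_getElem]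
    intro i hi
    rintro ⟨h1, h2⟩
    have hi1 : i < J.length := by omega
    have hi2 : i + 1 < J.length := by omega
    have hsplit : J = J.take i ++ J.get ⟨i, hi1⟩ :: J.get ⟨i + 1, hi2⟩ ::
        J.drop (i + 2) := by
      conv_lhs => rw [← List.take_append_drop i J]
      rw [List.drop_eq_getElem_cons hi1, List.drop_eq_getElem_cons hi2]
      rfl
    rw [hsplit] at hJ hdeg
    obtain ⟨hcov', harr'⟩ := shrink 𝒢 s v _ _ _ _ hJ hdeg h1 h2
    set J' := J.take i ++ J.drop (i + 2) with hJ'def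
    have hlen : J'.length = J.length - 2 := by
      simp [hJ'def, List.length_take, List.length_drop]
      omega
    have harrm : arrival J' 0 = m := by
      have h1 : arrival J' 0 ≤ m := by rw [← hJa, hsplit]; exact harr'
      by_contra h
      exact hmmin (arrival J' 0) ⟨J', hcov', rfl⟩ (show arrival J' 0 < m by omega)
    exact hkmin J'.length ⟨J', hcov', harrm, rfl⟩ (show J'.length < k by rw [hlen, ← hJk]; omega)
end

section
/- Let U = {1,…,m}, let S = {s_1,…,s_n} be a family of subsets of U, and let k be a positive integer. Construct the star G with center c and leaves v_1,…,v_m, p_1,…,p_n, p_0, and the static graphs on this vertex set: pass(i) with the single edge (c,p_i); take(i) with edge set {(c,v_j) : j ∈ s_i}; check with the single edge (c,p_0); and finish with edge set {(c,p_i) : 1 ≤ i ≤ n}. Let 𝒢 be the TVG (pass(1),1),(take(1),2|s_1|),(pass(1),1),(pass(2),1),(take(2),2|s_2|),(pass(2),1),…,(pass(n),1),(take(n),2|s_n|),(pass(n),1),(check,2),(finish,2k−1), of total duration D = 2n + 2·Σ_{i=1}^n |s_i| + 2k + 1. Then there exists a journey starting at c at time 0 that visits every vertex of G and arrives by time D if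 and only if S contains a subfamily of at most k sets whose union is U. -/
open TVG

namespace Stmt3

/-- Vertices of the star: the center `c`, element points `v_1,…,v_m`, and set/check
points `p_0,p_1,…,p_n`. -/
abbrev SV (m n : ℕ) := Unit ⊕ Fin m ⊕ Fin (n + 1)

variable {m n : ℕ}

def ctr : SV m n := Sum.inl ()
def elt (j : Fin m) : SV m n := Sum.inr (Sum.inl j)
def pt (i : Fin (n + 1)) : SV m n := Sum.inr (Sum.inr i)

/-- The underlying star: the center is adjacent to every other vertex. -/
def starG (m n : ℕ) : SimpleGraph (SV m n) :=
  SimpleGraph.fromRel (fun u _ => u = ctr)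

/-- Symmetrize a relation and make it time-independent. -/
def sym (r : SV m n → SV m n → Prop) : SV m n → SV m n → ℕ → Prop :=
  fun u v _ => r u v ∨ r v u

/-- `pass(i)`: only the edge `(c, p_i)` (for the set `s_i`, i.e. index `i.succ`). -/
def passR (i : Fin n) : SV m n → SV m n → ℕ → Prop :=
  sym fun u v => u = ctr ∧ v = pt i.succ

/-- `take(i)`: the edges `(c, v_j)` for `j ∈ s_i`. -/
def takeR (s : Finset (Fin m)) : SV m n → SV m n → ℕ → Prop :=
  sym fun u v => u = ctr ∧ ∃ j ∈ s, v = elt j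

/-- `check`: only the edge `(c, p_0)`. -/
def checkR : SV m n → SV m n → ℕ → Prop :=
  sym fun u v => u = ctr ∧ v = pt 0

/-- `finish`: the edges `(c, p_i)` for `1 ≤ i ≤ n`. -/
def finishR : SV m n → SV m n → ℕ → Prop :=
  sym fun u v => u = ctr ∧ ∃ i : Fin n, v = pt i.succ

/-- The schedule `(pass(1),1),(take(1),2|s_1|),(pass(1),1),…,(check,2),(finish,2k-1)`. -/
def blocks (S : Fin n → Finset (Fin m)) (k : ℕ) :
    List ((SV m n → SV m n → ℕ → Prop) × ℕ) :=
  ((List.finRange n).flatMap fun i =>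
    [(passR i, 1), (takeR (S i), 2 * (S i).card), (passR i, 1)])
  ++ [(checkR, 2), (finishR, 2 * k - 1)]

/-- The TVG of the reduction. -/
def 𝒢 (S : Fin n → Finset (Fin m)) (k : ℕ) : TVG (SV m n) :=
  ⟨starG m n, schedAvail (blocks S k)⟩

end Stmt3

section Aux

open TVG Stmt3 List

variable {V : Type} {m n : ℕ}

/-- Total duration of a schedule. -/
def totDur (L : List ((V → V → ℕ → Prop) × ℕ)) : ℕ := (L.map Prod.snd).sum

theorem schedAvail_lt {L : List ((V → V → ℕ → Prop) × ℕ)} {u v t} :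
    schedAvail L u v t → t < totDur L := by
  induction L generalizing t with
  | nil => intro h; exact absurd h (by simp [schedAvail])
  | cons a rest ih =>
    obtain ⟨r, d⟩ := a
    intro h
    simp only [schedAvail] at h
    simp only [totDur, map_cons, sum_cons]
    split_ifs at h with hd
    · omega
    · have := ih h
      simp only [totDur] at this
      omega

theorem schedAvail_append {L1 L2 : List ((V → V → ℕ → Prop) × ℕ)} {u v t} :
    schedAvail (L1 ++ L2) u v t ↔
      (t < totDur L1 ∧ schedAvail L1 u v t) ∨
      (totDur L1 ≤ t ∧ schedAvail L2 u v (t - totDur L1)) := by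
  induction L1 generalizing t with
  | nil => simp [totDur, schedAvail]
  | cons a rest ih =>
    obtain ⟨r, d⟩ := a
    simp only [cons_append, schedAvail, totDur, map_cons, sum_cons] at *
    split_ifs with hd
    · constructor
      · intro h; exact Or.inl ⟨by omega, h⟩
      · rintro (⟨_, h⟩ | ⟨h, _⟩) <;> [exact h; omega]
    · rw [ih]
      constructor
      · rintro (⟨h1, h2⟩ | ⟨h1, h2⟩)
        · exact Or.inl ⟨by omega, h2⟩
        · refine Or.inr ⟨by omega, ?_⟩
          rw [← Nat.sub_sub]
          exact h2
      · rintro (⟨h1, h2⟩ | ⟨h1, h2⟩)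
        · exact Or.inl ⟨by omega, h2⟩
        · refine Or.inr ⟨by omega, ?_⟩
          rw [Nat.sub_sub]
          exact h2

namespace Stmt3

variable (S : Fin n → Finset (Fin m))

/-- The `i`-th block of the schedule. -/
def B (i : Fin n) : List ((SV m n → SV m n → ℕ → Prop) × ℕ) :=
  [(passR i, 1), (takeR (S i), 2 * (S i).card), (passR i, 1)]

/-- Cardinality of `S i`, as a function of `ℕ`. -/
def cardAt (j : ℕ) : ℕ := if h : j < n then (S ⟨j, h⟩).card else 0

/-- Start time of block `a`. -/
def st (a : ℕ) : ℕ := ∑ j ∈ Finset.range a, (2 + 2 * cardAt S j)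

theorem st_mono {S : Fin n → Finset (Fin m)} : Monotone (st S) := by
  intro a b hab
  exact Finset.sum_le_sum_of_subset (Finset.range_subset_range.2 hab)

theorem st_succ (a : ℕ) : st S (a + 1) = st S a + (2 + 2 * cardAt S a) :=
  Finset.sum_range_succ _ _

theorem totDur_B (i : Fin n) : totDur (B S i) = 2 + 2 * (S i).card := by
  simp [B, totDur]; omega

theorem st_coe (i : Fin n) : st S ((i : ℕ) + 1) = st S i + (2 + 2 * (S i).card) := by
  rw [st_succ]
  congr 2
  simp [cardAt, i.isLt]

theorem blocks_eq (k : ℕ) :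
    blocks S k = ((List.finRange n).flatMap (B S)) ++ [(checkR, 2), (finishR, 2 * k - 1)] := rfl

theorem totDur_append (L1 L2 : List ((V → V → ℕ → Prop) × ℕ)) :
    totDur (L1 ++ L2) = totDur L1 + totDur L2 := by simp [totDur]

theorem st_take (a : ℕ) (ha : a ≤ n) :
    totDur ((((List.finRange n).take a).flatMap (B S))) = st S a := by
  induction a with
  | zero => simp [st, totDur]
  | succ a ih =>
    have ha' : a < (List.finRange n).length := by simpa using ha
    have han : a < n := by simpa using ha'
    have hg : (List.finRange n)[a] = (⟨a, han⟩ : Fin n) := by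
      simp [List.getElem_finRange]
    rw [List.take_succ, List.getElem?_eq_getElem ha', hg]
    rw [List.flatMap_append, totDur_append, ih (by omega), st_succ]
    have h3 : totDur (((some (⟨a, han⟩ : Fin n)).toList).flatMap (B S)) = 2 + 2 * cardAt S a := by
      simp only [Option.toList_some, List.flatMap_cons, List.flatMap_nil, List.append_nil]
      rw [show totDur (B S ⟨a, han⟩) = 2 + 2 * (S ⟨a, han⟩).card from totDur_B S _]
      simp [cardAt, han]
    rw [h3]

theorem st_n : st S n = 2 * n + 2 * ∑ i, (S i).card := by
  rw [st, Finset.sum_add_distrib, Finset.sum_const, Finset.card_range, ← Finset.mul_sum,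
    ← Fin.sum_univ_eq_sum_range (fun j => cardAt S j) n]
  have h : ∀ i : Fin n, cardAt S (i : ℕ) = (S i).card := fun i => by simp [cardAt]
  rw [Finset.sum_congr rfl fun i _ => h i]
  simp only [smul_eq_mul]
  omega

theorem decomp (i : Fin n) :
    (List.finRange n).flatMap (B S) =
      (((List.finRange n).take i).flatMap (B S)) ++
        (B S i ++ (((List.finRange n).drop ((i : ℕ) + 1)).flatMap (B S))) := by
  conv_lhs => rw [← List.take_append_drop (i : ℕ) (List.finRange n)]
  rw [List.flatMap_append]
  congr 1
  have hi : (i : ℕ) < (List.finRange n).length := by simpa using i.isLt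
  rw [List.drop_eq_getElem_cons hi]
  simp only [List.flatMap_cons]
  congr 2
  simp [List.getElem_finRange, Fin.cast]

end Stmt3

end Aux
namespace Stmt3

variable {m n : ℕ} (S : Fin n → Finset (Fin m))

theorem avail_block {k : ℕ} (i : Fin n) {t : ℕ} (h1 : st S i ≤ t)
    (h2 : t < st S ((i : ℕ) + 1)) (u v : SV m n) :
    schedAvail (blocks S k) u v t ↔ schedAvail (B S i) u v (t - st S i) := by
  have hto := st_take S (i : ℕ) (by omega)
  have hdur := totDur_B S i
  rw [blocks_eq, decomp S i, List.append_assoc, List.append_assoc, schedAvail_append, hto,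
    schedAvail_append, hdur]
  have hcoe := st_coe S i
  constructor
  · rintro (⟨h, _⟩ | ⟨_, (⟨_, h⟩ | ⟨h, _⟩)⟩)
    · omega
    · exact h
    · omega
  · intro h
    exact Or.inr ⟨h1, Or.inl ⟨by omega, h⟩⟩

theorem totDur_flat : totDur ((List.finRange n).flatMap (B S)) = st S n := by
  rw [← st_take S n le_rfl]
  congr 1
  rw [List.take_of_length_le (le_of_eq (List.length_finRange (n := n)))]

theorem avail_tail {k t : ℕ} (h : st S n ≤ t) (u v : SV m n) :
    schedAvail (blocks S k) u v t ↔
      schedAvail [(checkR, 2), (finishR, 2 * k - 1)] u v (t - st S n) := by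
  rw [blocks_eq, schedAvail_append, totDur_flat]
  constructor
  · rintro (⟨h', _⟩ | ⟨_, h'⟩)
    · omega
    · exact h'
  · intro h'
    exact Or.inr ⟨h, h'⟩

theorem exists_block {t : ℕ} (h : t < st S n) :
    ∃ i : Fin n, st S i ≤ t ∧ t < st S ((i : ℕ) + 1) := by
  have key : ∀ a, a ≤ n → t < st S a → ∃ j, ∃ _ : j < n, st S j ≤ t ∧ t < st S (j + 1) := by
    intro a
    induction a with
    | zero => intro _ h0; rw [show st S 0 = 0 from rfl] at h0; omega
    | succ a ih =>
      intro ha hlt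
      by_cases h' : t < st S a
      · exact ih (by omega) h'
      · exact ⟨a, by omega, by omega, hlt⟩
  obtain ⟨j, hj, h1, h2⟩ := key n le_rfl h
  exact ⟨⟨j, hj⟩, h1, h2⟩

theorem schedAvail_B_iff (i : Fin n) (u v : SV m n) (s : ℕ) :
    schedAvail (B S i) u v s ↔
      ((s = 0 ∨ s = 2 * (S i).card + 1) ∧ passR i u v 0) ∨
      (1 ≤ s ∧ s ≤ 2 * (S i).card ∧ takeR (S i) u v 0) := by
  have hp : ∀ t', passR (m := m) i u v t' ↔ passR i u v 0 := fun _ => Iff.rfl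
  have ht : ∀ t', takeR (S i) u v t' ↔ takeR (S i) u v 0 := fun _ => Iff.rfl
  simp only [B, schedAvail]
  split_ifs with h1 h2 h3
  · rw [hp]
    constructor
    · intro h; exact Or.inl ⟨Or.inl (by omega), h⟩
    · rintro (⟨_, h⟩ | ⟨h, _, _⟩)
      · exact h
      · omega
  · rw [ht]
    constructor
    · intro h; exact Or.inr ⟨by omega, by omega, h⟩
    · rintro (⟨hs, _⟩ | ⟨_, _, h⟩)
      · omega
      · exact h
  · rw [hp]
    constructor
    · intro h; exact Or.inl ⟨Or.inr (by omega), h⟩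
    · rintro (⟨hs, h⟩ | ⟨hs, hs', _⟩)
      · exact h
      · omega
  · constructor
    · intro h; exact absurd h (by simp [schedAvail])
    · rintro (⟨hs, _⟩ | ⟨hs, hs', _⟩) <;> omega

theorem schedAvail_tail_iff (k : ℕ) (hk : 0 < k) (u v : SV m n) (s : ℕ) :
    schedAvail [(checkR, 2), (finishR, 2 * k - 1)] u v s ↔
      ((s = 0 ∨ s = 1) ∧ checkR u v 0) ∨ (2 ≤ s ∧ s ≤ 2 * k ∧ finishR u v 0) := by
  have hc : ∀ t', checkR (m := m) (n := n) u v t' ↔ checkR u v 0 := fun _ => Iff.rfl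
  have hf : ∀ t', finishR (m := m) (n := n) u v t' ↔ finishR u v 0 := fun _ => Iff.rfl
  simp only [schedAvail]
  split_ifs with h1 h2
  · rw [hc]
    constructor
    · intro h; exact Or.inl ⟨by omega, h⟩
    · rintro (⟨_, h⟩ | ⟨hs, _, _⟩)
      · exact h
      · omega
  · rw [hf]
    constructor
    · intro h; exact Or.inr ⟨by omega, by omega, h⟩
    · rintro (⟨hs, _⟩ | ⟨_, _, h⟩)
      · omega
      · exact h
  · constructor
    · intro h; exact absurd h (by simp [schedAvail])
    · rintro (⟨hs, _⟩ | ⟨hs, hs', _⟩) <;> omega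

theorem avail_iff {k : ℕ} (hk : 0 < k) (u v : SV m n) (t : ℕ) :
    schedAvail (blocks S k) u v t ↔
      (∃ i : Fin n, (t = st S i ∨ t = st S i + (2 * (S i).card + 1)) ∧ passR i u v 0) ∨
      (∃ i : Fin n, st S i + 1 ≤ t ∧ t ≤ st S i + 2 * (S i).card ∧ takeR (S i) u v 0) ∨
      ((t = st S n ∨ t = st S n + 1) ∧ checkR u v 0) ∨
      (st S n + 2 ≤ t ∧ t ≤ st S n + 2 * k ∧ finishR u v 0) := by
  constructor
  · intro h
    by_cases hC : t < st S n
    · obtain ⟨i, h1, h2⟩ := exists_block S hC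
      rw [avail_block S i h1 h2, schedAvail_B_iff] at h
      have hcoe := st_coe S i
      rcases h with ⟨hs, hp⟩ | ⟨hs1, hs2, htk⟩
      · exact Or.inl ⟨i, by omega, hp⟩
      · exact Or.inr (Or.inl ⟨i, by omega, by omega, htk⟩)
    · rw [avail_tail S (by omega), schedAvail_tail_iff k hk] at h
      rcases h with ⟨hs, hc⟩ | ⟨hs1, hs2, hf⟩
      · exact Or.inr (Or.inr (Or.inl ⟨by omega, hc⟩))
      · exact Or.inr (Or.inr (Or.inr ⟨by omega, by omega, hf⟩))
  · intro h
    rcases h with ⟨i, hs, hp⟩ | ⟨i, hs1, hs2, htk⟩ | ⟨hs, hc⟩ | ⟨hs1, hs2, hf⟩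
    · have hcoe := st_coe S i
      rw [avail_block S i (by omega) (by omega), schedAvail_B_iff]
      exact Or.inl ⟨by omega, hp⟩
    · have hcoe := st_coe S i
      rw [avail_block S i (by omega) (by omega), schedAvail_B_iff]
      exact Or.inr ⟨by omega, ⟨by omega, htk⟩⟩
    · rw [avail_tail S (by omega), schedAvail_tail_iff k hk]
      exact Or.inl ⟨by omega, hc⟩
    · rw [avail_tail S (by omega), schedAvail_tail_iff k hk]
      exact Or.inr ⟨by omega, by omega, hf⟩

theorem avail_lt_D {k : ℕ} (hk : 0 < k) {u v : SV m n} {t : ℕ} :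
    schedAvail (blocks S k) u v t → t < st S n + 2 * k + 1 := by
  intro h
  have := schedAvail_lt h
  rw [blocks_eq, totDur_append, totDur_flat] at this
  have h2 : totDur [(checkR (m := m) (n := n), 2), (finishR, 2 * k - 1)] = 2 + (2 * k - 1) := by
    simp [totDur]
  omega

theorem adj_iff {u v : SV m n} : (starG m n).Adj u v ↔ u ≠ v ∧ (u = ctr ∨ v = ctr) := by
  constructor
  · intro h
    rw [starG, SimpleGraph.fromRel_adj] at h
    exact ⟨h.1, h.2⟩
  · intro ⟨h1, h2⟩
    rw [starG, SimpleGraph.fromRel_adj]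
    exact ⟨h1, by tauto⟩

end Stmt3
section Struct

open TVG List

variable {V : Type}

theorem linked_pairwise {J : List (Step V)} (h : J.Chain' Linked) :
    J.Pairwise fun x y => x.2.2 < y.2.2 := by
  haveI : IsTrans (Step V) (fun x y => x.2.2 < y.2.2) := ⟨fun a b c h1 h2 => lt_trans h1 h2⟩
  haveI : Trans (fun x y : Step V => x.2.2 < y.2.2) (fun x y : Step V => x.2.2 < y.2.2) (fun x y : Step V => x.2.2 < y.2.2) := ⟨fun h1 h2 => lt_trans h1 h2⟩
  exact List.isChain_iff_pairwise.mp (h.imp fun a b hab => Nat.lt_of_lt_of_le (Nat.lt_succ_self _) hab.2)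

theorem time_inj {J : List (Step V)} (hc : J.Chain' Linked)
    {x y : Step V} (hx : x ∈ J) (hy : y ∈ J) (ht : x.2.2 = y.2.2) : x = y := by
  have hp := linked_pairwise hc
  rw [List.pairwise_iff_getElem] at hp
  obtain ⟨a, ha, rfl⟩ := List.mem_iff_getElem.mp hx
  obtain ⟨b, hb, rfl⟩ := List.mem_iff_getElem.mp hy
  rcases lt_trichotomy a b with h | h | h
  · exact absurd ht (by have := hp a b ha hb h; omega)
  · subst h; rfl
  · exact absurd ht (by have := hp b a hb ha h; omega)

theorem exists_leave {J : List (Step V)} (hc : J.Chain' Linked)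
    {x y : Step V} (hx : x ∈ J) (hy : y ∈ J) (ht : x.2.2 < y.2.2) (hne : y.1 ≠ x.2.1) :
    ∃ z ∈ J, z.1 = x.2.1 ∧ x.2.2 < z.2.2 ∧ z.2.2 < y.2.2 := by
  have hp := linked_pairwise hc
  rw [List.pairwise_iff_getElem] at hp
  rw [show J.Chain' Linked ↔ J.IsChain Linked from Iff.rfl, List.isChain_iff_getElem] at hc
  obtain ⟨a, ha, rfl⟩ := List.mem_iff_getElem.mp hx
  obtain ⟨b, hb, rfl⟩ := List.mem_iff_getElem.mp hy
  have hab : a < b := by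
    rcases lt_trichotomy a b with h | h | h
    · exact h
    · subst h; omega
    · exact absurd ht (by have := hp b a hb ha h; omega)
  have ha1 : a + 1 < J.length := by omega
  have hlink : Linked (J.get ⟨a, by omega⟩) (J.get ⟨a + 1, by omega⟩) := hc a (by omega)
  simp only [List.get_eq_getElem] at hlink
  have hlink2 := hlink.2
  refine ⟨J[a + 1], List.getElem_mem _, hlink.1, by omega, ?_⟩
  rcases Nat.lt_or_ge (a + 1) b with h | h
  · exact hp (a + 1) b ha1 hb h
  · exfalso
    have hb1 : a + 1 = b := by omega
    have heq : J[a + 1] = J[b] := by subst hb1; rfl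
    apply hne
    rw [← heq]
    exact hlink.1

theorem succ_step {J : List (Step V)} (hc : J.Chain' Linked)
    {x y : Step V} (hx : x ∈ J) (hy : y ∈ J) (ht : y.2.2 = x.2.2 + 1) : y.1 = x.2.1 := by
  have hp := linked_pairwise hc
  rw [List.pairwise_iff_getElem] at hp
  rw [show J.Chain' Linked ↔ J.IsChain Linked from Iff.rfl, List.isChain_iff_getElem] at hc
  obtain ⟨a, ha, rfl⟩ := List.mem_iff_getElem.mp hx
  obtain ⟨b, hb, rfl⟩ := List.mem_iff_getElem.mp hy
  have hab : a < b := by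
    rcases lt_trichotomy a b with h | h | h
    · exact h
    · subst h; omega
    · exact absurd ht (by have := hp b a hb ha h; omega)
  have hlink : Linked (J.get ⟨a, by omega⟩) (J.get ⟨a + 1, by omega⟩) := hc a (by omega)
  simp only [List.get_eq_getElem] at hlink
  have hlink2 := hlink.2
  rcases Nat.lt_or_ge (a + 1) b with h | h
  · exact absurd ht (by have h2 := hp (a + 1) b (by omega) hb h; omega)
  · have hb1 : a + 1 = b := by omega
    have heq : J[a + 1] = J[b] := by subst hb1; rfl
    rw [← heq]
    exact hlink.1

end Struct
namespace Stmt3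

theorem forward {m n k : ℕ} (hk : 0 < k) (S : Fin n → Finset (Fin m))
    (J : List (Step (SV m n))) (h : (𝒢 S k).IsCoveringFrom J ctr) :
    ∃ I : Finset (Fin n), I.card ≤ k ∧ ∀ j : Fin m, ∃ i ∈ I, j ∈ S i := by
  classical
  obtain ⟨⟨hstep, hchain⟩, hstart, hvis⟩ := h
  have hadj : ∀ x ∈ J, (starG m n).Adj x.1 x.2.1 := fun x hx => (hstep x hx).1
  have havail : ∀ x ∈ J, schedAvail (blocks S k) x.1 x.2.1 x.2.2 := fun x hx => (hstep x hx).2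
  have hvst : ∀ v : SV m n, v ≠ ctr → ∃ x ∈ J, x.1 = ctr ∧ x.2.1 = v := by
    intro v hv
    rcases hvis v with h | ⟨x, hxJ, hx⟩
    · exact absurd h hv
    · have h2 := hadj x hxJ
      rw [adj_iff] at h2
      rcases h2.2 with h1 | h1
      · exact ⟨x, hxJ, h1, hx⟩
      · rw [hx] at h1; exact absurd h1 hv
  set U : Fin n → Prop := fun i => ∃ x ∈ J, x.1 = ctr ∧ (∃ j, x.2.1 = elt j) ∧
      st S i + 1 ≤ x.2.2 ∧ x.2.2 ≤ st S i + 2 * (S i).card with hU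
  have hmemI : ∀ i : Fin n, i ∈ Finset.univ.filter U ↔ U i := fun i =>
    ⟨fun h => (Finset.mem_filter.mp h).2, fun h => Finset.mem_filter.mpr ⟨Finset.mem_univ _, h⟩⟩
  -- the key claim: every "used" block index forces a visit of its point in the finish window
  have main : ∀ i : Fin n, U i →
      ∃ z ∈ J, z.2.1 = pt i.succ ∧ st S n + 2 ≤ z.2.2 ∧ z.2.2 ≤ st S n + 2 * k := by
    intro i hUi
    obtain ⟨x, hxJ, hx1, ⟨j, hxel⟩, hxt1, hxt2⟩ := hUi
    obtain ⟨z, hzJ, hz1, hz2⟩ := hvst (pt i.succ) (by simp [pt, ctr])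
    have hzav := havail z hzJ
    rw [hz1, hz2, avail_iff S hk] at hzav
    have hcoe := st_coe S i
    have hmono : st S ((i : ℕ) + 1) ≤ st S n := st_mono (by omega)
    rcases hzav with ⟨i', hti', hp⟩ | ⟨i', _, _, htk⟩ | ⟨_, hc⟩ | ⟨hf1, hf2, _⟩
    · -- arrived at p during a pass step: impossible given the take step / check step
      exfalso
      have hp' : ((ctr : SV m n) = ctr ∧ (pt i.succ : SV m n) = pt i'.succ) ∨
          ((pt i.succ : SV m n) = ctr ∧ (ctr : SV m n) = pt i'.succ) := hp
      have hii : i' = i := by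
        rcases hp' with ⟨_, h⟩ | ⟨h, _⟩
        · simp only [pt, Sum.inr.injEq] at h
          exact (Fin.succ_inj.mp h).symm
        · simp [pt, ctr] at h
      rw [hii] at hti'
      rcases hti' with hz | hz
      · -- first pass step; the take step comes later, so the journey must leave p in between
        have hlt : z.2.2 < x.2.2 := by omega
        obtain ⟨y, hyJ, hy1, hyt1, hyt2⟩ :=
          exists_leave hchain hzJ hxJ hlt (by rw [hx1, hz2]; simp [ctr, pt])
        rw [hz2] at hy1
        have hyadj := hadj y hyJ
        rw [adj_iff] at hyadj
        have hy2 : y.2.1 = ctr := by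
          rcases hyadj.2 with h | h
          · rw [hy1] at h; simp [ctr, pt] at h
          · exact h
        have hyav := havail y hyJ
        rw [hy1, hy2, avail_iff S hk] at hyav
        rcases hyav with ⟨i'', hyt, hyp⟩ | ⟨i'', _, _, hytk⟩ | ⟨_, hyc⟩ | ⟨hyf, _, _⟩
        · have hyp' : ((pt i.succ : SV m n) = ctr ∧ (ctr : SV m n) = pt i''.succ) ∨
              ((ctr : SV m n) = ctr ∧ (pt i.succ : SV m n) = pt i''.succ) := hyp
          have hii'' : i'' = i := by
            rcases hyp' with ⟨h, _⟩ | ⟨_, h⟩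
            · simp [pt, ctr] at h
            · simp only [pt, Sum.inr.injEq] at h
              exact (Fin.succ_inj.mp h).symm
          rw [hii''] at hyt
          omega
        · have hytk' : ((pt i.succ : SV m n) = ctr ∧ ∃ j' ∈ S i'', (ctr : SV m n) = elt j') ∨
              ((ctr : SV m n) = ctr ∧ ∃ j' ∈ S i'', (pt i.succ : SV m n) = elt j') := hytk
          rcases hytk' with ⟨h, _⟩ | ⟨_, j', _, h⟩
          · simp [pt, ctr] at h
          · simp [pt, elt] at h
        · have hyc' : ((pt i.succ : SV m n) = ctr ∧ (ctr : SV m n) = pt 0) ∨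
              ((ctr : SV m n) = ctr ∧ (pt i.succ : SV m n) = pt 0) := hyc
          rcases hyc' with ⟨h, _⟩ | ⟨_, h⟩
          · simp [pt, ctr] at h
          · simp only [pt, Sum.inr.injEq] at h
            exact Fin.succ_ne_zero i h
        · omega
      · -- second pass step; the journey would be stuck at p past the check window
        obtain ⟨w, hwJ, hw1, hw2⟩ := hvst (pt 0) (by simp [pt, ctr])
        have hwav := havail w hwJ
        rw [hw1, hw2, avail_iff S hk] at hwav
        have hwt : w.2.2 = st S n ∨ w.2.2 = st S n + 1 := by
          rcases hwav with ⟨i'', _, hp''⟩ | ⟨i'', _, _, htk''⟩ | ⟨ht, _⟩ | ⟨_, _, hf''⟩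
          · exfalso
            have h2 : ((ctr : SV m n) = ctr ∧ (pt 0 : SV m n) = pt i''.succ) ∨
                ((pt 0 : SV m n) = ctr ∧ (ctr : SV m n) = pt i''.succ) := hp''
            rcases h2 with ⟨_, h⟩ | ⟨h, _⟩
            · simp only [pt, Sum.inr.injEq] at h
              exact Fin.succ_ne_zero i'' h.symm
            · simp [pt, ctr] at h
          · exfalso
            have h2 : ((ctr : SV m n) = ctr ∧ ∃ j' ∈ S i'', (pt 0 : SV m n) = elt j') ∨
                ((pt 0 : SV m n) = ctr ∧ ∃ j' ∈ S i'', (ctr : SV m n) = elt j') := htk''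
            rcases h2 with ⟨_, j', _, h⟩ | ⟨h, _⟩
            · simp [pt, elt] at h
            · simp [pt, ctr] at h
          · exact ht
          · exfalso
            have h2 : ((ctr : SV m n) = ctr ∧ ∃ i'' : Fin n, (pt 0 : SV m n) = pt i''.succ) ∨
                ((pt 0 : SV m n) = ctr ∧ ∃ i'' : Fin n, (ctr : SV m n) = pt i''.succ) := hf''
            rcases h2 with ⟨_, i'', h⟩ | ⟨h, _⟩
            · simp only [pt, Sum.inr.injEq] at h
              exact Fin.succ_ne_zero i'' h.symm
            · simp [pt, ctr] at h
        have hlt : z.2.2 < w.2.2 := by omega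
        obtain ⟨y, hyJ, hy1, hyt1, hyt2⟩ :=
          exists_leave hchain hzJ hwJ hlt (by rw [hw1, hz2]; simp [ctr, pt])
        rw [hz2] at hy1
        have hyadj := hadj y hyJ
        rw [adj_iff] at hyadj
        have hy2 : y.2.1 = ctr := by
          rcases hyadj.2 with h | h
          · rw [hy1] at h; simp [ctr, pt] at h
          · exact h
        have hyav := havail y hyJ
        rw [hy1, hy2, avail_iff S hk] at hyav
        rcases hyav with ⟨i'', hyt, hyp⟩ | ⟨i'', _, _, hytk⟩ | ⟨_, hyc⟩ | ⟨hyf, _, _⟩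
        · have hyp' : ((pt i.succ : SV m n) = ctr ∧ (ctr : SV m n) = pt i''.succ) ∨
              ((ctr : SV m n) = ctr ∧ (pt i.succ : SV m n) = pt i''.succ) := hyp
          have hii'' : i'' = i := by
            rcases hyp' with ⟨h, _⟩ | ⟨_, h⟩
            · simp [pt, ctr] at h
            · simp only [pt, Sum.inr.injEq] at h
              exact (Fin.succ_inj.mp h).symm
          rw [hii''] at hyt
          omega
        · have hytk' : ((pt i.succ : SV m n) = ctr ∧ ∃ j' ∈ S i'', (ctr : SV m n) = elt j') ∨
              ((ctr : SV m n) = ctr ∧ ∃ j' ∈ S i'', (pt i.succ : SV m n) = elt j') := hytk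
          rcases hytk' with ⟨h, _⟩ | ⟨_, j', _, h⟩
          · simp [pt, ctr] at h
          · simp [pt, elt] at h
        · have hyc' : ((pt i.succ : SV m n) = ctr ∧ (ctr : SV m n) = pt 0) ∨
              ((ctr : SV m n) = ctr ∧ (pt i.succ : SV m n) = pt 0) := hyc
          rcases hyc' with ⟨h, _⟩ | ⟨_, h⟩
          · simp [pt, ctr] at h
          · simp only [pt, Sum.inr.injEq] at h
            exact Fin.succ_ne_zero i h
        · omega
    · -- arrived at p via a take edge: impossible
      exfalso
      have htk' : ((ctr : SV m n) = ctr ∧ ∃ j' ∈ S i', (pt i.succ : SV m n) = elt j') ∨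
          ((pt i.succ : SV m n) = ctr ∧ ∃ j' ∈ S i', (ctr : SV m n) = elt j') := htk
      rcases htk' with ⟨_, j', _, h⟩ | ⟨h, _⟩
      · simp [pt, elt] at h
      · simp [pt, ctr] at h
    · -- arrived at p via the check edge: impossible
      exfalso
      have hc' : ((ctr : SV m n) = ctr ∧ (pt i.succ : SV m n) = pt 0) ∨
          ((pt i.succ : SV m n) = ctr ∧ (ctr : SV m n) = pt 0) := hc
      rcases hc' with ⟨_, h⟩ | ⟨h, _⟩
      · simp only [pt, Sum.inr.injEq] at h
        exact Fin.succ_ne_zero i h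
      · simp [pt, ctr] at h
    · exact ⟨z, hzJ, hz2, hf1, hf2⟩
  choose! Z hZJ hZpt hZlb hZub using main
  refine ⟨Finset.univ.filter U, ?_, ?_⟩
  · -- card bound via injection into time slots of the finish window
    have hinj : Set.InjOn (fun i => ((Z i).2.2 - (st S n + 2)) / 2) (Finset.univ.filter U) := by
      intro i hi i' hi' he
      simp only at he
      have hUi : U i := (hmemI i).1 hi
      have hUi' : U i' := (hmemI i').1 hi'
      by_contra hne
      have hzne : Z i ≠ Z i' := by
        intro h2
        apply hne
        have h3 := hZpt i hUi
        rw [h2, hZpt i' hUi'] at h3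
        simp only [pt, Sum.inr.injEq] at h3
        exact Fin.succ_inj.mp h3.symm
      have htne : (Z i).2.2 ≠ (Z i').2.2 := fun h2 =>
        hzne (time_inj hchain (hZJ i hUi) (hZJ i' hUi') h2)
      have hb1 := hZlb i hUi
      have hb2 := hZub i hUi
      have hb3 := hZlb i' hUi'
      have hb4 := hZub i' hUi'
      have hdiff : (Z i').2.2 = (Z i).2.2 + 1 ∨ (Z i).2.2 = (Z i').2.2 + 1 := by omega
      have hctr : ∀ a, U a → (Z a).1 = ctr := by
        intro a hUa
        have h2 := hadj _ (hZJ a hUa)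
        rw [adj_iff] at h2
        rcases h2.2 with h3 | h3
        · exact h3
        · rw [hZpt a hUa] at h3; simp [pt, ctr] at h3
      rcases hdiff with hd | hd
      · have h1 : (Z i').1 = (Z i).2.1 := succ_step hchain (hZJ i hUi) (hZJ i' hUi') hd
        rw [hctr i' hUi', hZpt i hUi] at h1
        simp [ctr, pt] at h1
      · have h1 : (Z i).1 = (Z i').2.1 := succ_step hchain (hZJ i' hUi') (hZJ i hUi) hd
        rw [hctr i hUi, hZpt i' hUi'] at h1
        simp [ctr, pt] at h1
    have hsub : ∀ i ∈ Finset.univ.filter U, ((Z i).2.2 - (st S n + 2)) / 2 ∈ Finset.range k := by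
      intro i hi
      have hb1 := hZlb i ((hmemI i).1 hi)
      have hb2 := hZub i ((hmemI i).1 hi)
      simp only [Finset.mem_range]
      omega
    have h2 := Finset.card_le_card_of_injOn _ hsub hinj
    simpa using h2
  · -- the used blocks cover all the elements
    intro j
    obtain ⟨x, hxJ, hx1, hx2⟩ := hvst (elt j) (by simp [elt, ctr])
    have hav := havail x hxJ
    rw [hx1, hx2, avail_iff S hk] at hav
    rcases hav with ⟨i, _, hp⟩ | ⟨i, ht1, ht2, htk⟩ | ⟨_, hc⟩ | ⟨_, _, hf⟩
    · exfalso
      have hp' : ((ctr : SV m n) = ctr ∧ (elt j : SV m n) = pt i.succ) ∨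
          ((elt j : SV m n) = ctr ∧ (ctr : SV m n) = pt i.succ) := hp
      rcases hp' with ⟨_, h⟩ | ⟨h, _⟩
      · simp [elt, pt] at h
      · simp [elt, ctr] at h
    · have htk' : ((ctr : SV m n) = ctr ∧ ∃ j' ∈ S i, (elt j : SV m n) = elt j') ∨
          ((elt j : SV m n) = ctr ∧ ∃ j' ∈ S i, (ctr : SV m n) = elt j') := htk
      rcases htk' with ⟨_, j', hj', he⟩ | ⟨h, _⟩
      · have hjj : j = j' := by simpa [elt] using he
        subst hjj
        exact ⟨i, (hmemI i).2 ⟨x, hxJ, hx1, ⟨j, hx2⟩, ht1, ht2⟩, hj'⟩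
      · simp [elt, ctr] at h
    · exfalso
      have hc' : ((ctr : SV m n) = ctr ∧ (elt j : SV m n) = pt 0) ∨
          ((elt j : SV m n) = ctr ∧ (ctr : SV m n) = pt 0) := hc
      rcases hc' with ⟨_, h⟩ | ⟨h, _⟩
      · simp [elt, pt] at h
      · simp [elt, ctr] at h
    · exfalso
      have hf' : ((ctr : SV m n) = ctr ∧ ∃ i' : Fin n, (elt j : SV m n) = pt i'.succ) ∨
          ((elt j : SV m n) = ctr ∧ ∃ i' : Fin n, (ctr : SV m n) = pt i'.succ) := hf
      rcases hf' with ⟨_, i', h⟩ | ⟨h, _⟩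
      · simp [elt, pt] at h
      · simp [elt, ctr] at h

end Stmt3
section Plans

open TVG List

variable {α V : Type}

/-- Round trips from the center: visit `f a` at times `t, t+1`, then continue at `t+2`. -/
def tripsAux (f : α → V) : List α → ℕ → List (V × ℕ × ℕ)
  | [], _ => []
  | a :: r, t => (f a, t, t + 1) :: tripsAux f r (t + 2)

theorem mem_tripsAux {f : α → V} :
    ∀ {l : List α} {t : ℕ} {q : V × ℕ × ℕ}, q ∈ tripsAux f l t →
      (∃ a ∈ l, q.1 = f a) ∧ t ≤ q.2.1 ∧ q.2.2 = q.2.1 + 1 ∧ q.2.1 + 2 ≤ t + 2 * l.length := by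
  intro l
  induction l with
  | nil => intro t q h; simp [tripsAux] at h
  | cons a r ih =>
    intro t q h
    rw [tripsAux, List.mem_cons] at h
    rcases h with rfl | h
    · exact ⟨⟨a, List.mem_cons_self, rfl⟩, le_rfl, rfl, by simp only [List.length_cons]; omega⟩
    · obtain ⟨⟨b, hb, h1⟩, h2, h3, h4⟩ := ih h
      exact ⟨⟨b, List.mem_cons_of_mem _ hb, h1⟩, by omega, h3, by simp only [List.length_cons]; omega⟩

theorem tripsAux_visits {f : α → V} :
    ∀ {l : List α} {t : ℕ} {a : α}, a ∈ l → ∃ q ∈ tripsAux f l t, q.1 = f a := by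
  intro l
  induction l with
  | nil => intro t a h; simp at h
  | cons b r ih =>
    intro t a h
    rcases List.mem_cons.mp h with rfl | h
    · exact ⟨(f a, t, t + 1), by rw [tripsAux]; exact List.mem_cons_self, rfl⟩
    · obtain ⟨q, hq, h1⟩ := ih (t := t + 2) h
      exact ⟨q, by rw [tripsAux]; exact List.mem_cons_of_mem _ hq, h1⟩

theorem tripsAux_pairwise {f : α → V} :
    ∀ (l : List α) (t : ℕ), (tripsAux f l t).Pairwise fun q q' => q.2.2 + 1 ≤ q'.2.1 := by
  intro l
  induction l with
  | nil => intro t; simp [tripsAux]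
  | cons a r ih =>
    intro t
    rw [tripsAux, List.pairwise_cons]
    refine ⟨fun q hq => ?_, ih (t + 2)⟩
    have := (mem_tripsAux hq).2.1
    show t + 1 + 1 ≤ q.2.1
    omega

theorem tripsAux_ne_nil {f : α → V} {a : α} {r : List α} {t : ℕ} :
    tripsAux f (a :: r) t ≠ [] := by rw [tripsAux]; exact List.cons_ne_nil _ _

theorem tripsAux_dropLast {f : α → V} :
    ∀ {l : List α} {t : ℕ} {q : V × ℕ × ℕ}, q ∈ (tripsAux f l t).dropLast →
      q.2.2 + 3 ≤ t + 2 * l.length := by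
  intro l
  induction l with
  | nil => intro t q h; simp [tripsAux] at h
  | cons a r ih =>
    intro t q h
    rw [tripsAux] at h
    cases r with
    | nil => simp [tripsAux] at h
    | cons b r' =>
      rw [List.dropLast_cons_of_ne_nil tripsAux_ne_nil, List.mem_cons] at h
      rcases h with rfl | h
      · simp
        omega
      · have := ih h
        simp at this ⊢
        omega

/-- The journey induced by a plan of excursions from the center `c`. -/
def planJ (c : V) : List (V × ℕ × ℕ) → List (Step V)
  | [] => []
  | q :: r => (c, q.1, q.2.1) :: (q.1, c, q.2.2) :: planJ c r

theorem planJ_ne_nil {c : V} {q : V × ℕ × ℕ} {r : List (V × ℕ × ℕ)} :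
    planJ c (q :: r) ≠ [] := by rw [planJ]; exact List.cons_ne_nil _ _

theorem planJ_chain {c : V} :
    ∀ {p : List (V × ℕ × ℕ)}, (∀ q ∈ p, q.2.1 + 1 ≤ q.2.2) →
      p.Pairwise (fun q q' => q.2.2 + 1 ≤ q'.2.1) → (planJ c p).Chain' Linked := by
  intro p
  induction p with
  | nil => intro _ _; exact List.IsChain.nil
  | cons q r ih =>
    intro h1 h2
    rw [List.pairwise_cons] at h2
    rw [planJ, show ∀ l : List (Step V), l.Chain' Linked ↔ l.IsChain Linked from fun _ => Iff.rfl,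
      List.isChain_cons_cons, List.isChain_cons]
    refine ⟨⟨rfl, h1 q (List.mem_cons_self)⟩, fun y hy => ?_,
      ih (fun q' hq' => h1 q' (List.mem_cons_of_mem _ hq')) h2.2⟩
    cases r with
    | nil => simp [planJ] at hy
    | cons q' r' =>
      rw [planJ] at hy
      simp only [List.head?_cons, Option.mem_some_iff] at hy
      subst hy
      exact ⟨rfl, h2.1 q' (List.mem_cons_self)⟩

theorem planJ_dropLast_out {c : V} :
    ∀ {p : List (V × ℕ × ℕ)}, ∀ q ∈ p, (c, q.1, q.2.1) ∈ (planJ c p).dropLast := by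
  intro p
  induction p with
  | nil => intro q h; simp at h
  | cons q' r ih =>
    intro q hq
    rw [planJ]
    cases r with
    | nil =>
      rcases List.mem_cons.mp hq with rfl | h
      · simp [planJ]
      · simp at h
    | cons a r' =>
      rw [List.dropLast_cons₂, List.dropLast_cons_of_ne_nil planJ_ne_nil]
      rcases List.mem_cons.mp hq with rfl | h
      · exact List.mem_cons_self
      · exact List.mem_cons_of_mem _ (List.mem_cons_of_mem _ (ih q h))

theorem planJ_dropLast_mem {c : V} :
    ∀ {p : List (V × ℕ × ℕ)}, ∀ x ∈ (planJ c p).dropLast,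
      (∃ q ∈ p, x = (c, q.1, q.2.1)) ∨ (∃ q ∈ p.dropLast, x = (q.1, c, q.2.2)) := by
  intro p
  induction p with
  | nil => intro x h; simp [planJ] at h
  | cons q' r ih =>
    intro x hx
    rw [planJ] at hx
    cases r with
    | nil =>
      simp only [planJ, List.dropLast_cons₂, List.dropLast_singleton, List.mem_singleton] at hx
      subst hx
      exact Or.inl ⟨q', List.mem_cons_self, rfl⟩
    | cons a r' =>
      rw [List.dropLast_cons₂, List.dropLast_cons_of_ne_nil planJ_ne_nil, List.mem_cons,
        List.mem_cons] at hx
      rcases hx with rfl | rfl | hx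
      · exact Or.inl ⟨q', List.mem_cons_self, rfl⟩
      · refine Or.inr ⟨q', ?_, rfl⟩
        rw [List.dropLast_cons_of_ne_nil (List.cons_ne_nil _ _)]
        exact List.mem_cons_self
      · rcases ih x hx with ⟨q, hq, h⟩ | ⟨q, hq, h⟩
        · exact Or.inl ⟨q, List.mem_cons_of_mem _ hq, h⟩
        · refine Or.inr ⟨q, ?_, h⟩
          rw [List.dropLast_cons_of_ne_nil (List.cons_ne_nil _ _)]
          exact List.mem_cons_of_mem _ hq

theorem planJ_dropLast_starts {c : V} {p : List (V × ℕ × ℕ)} :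
    ∀ x ∈ ((planJ c p).dropLast).head?, x.1 = c := by
  cases p with
  | nil => simp [planJ]
  | cons q r =>
    rw [planJ, List.dropLast_cons₂]
    intro x hx
    simp only [List.head?_cons, Option.mem_some_iff] at hx
    subst hx
    rfl

theorem mem_of_getLast? {l : List α} {x : α} (h : l.getLast? = some x) : x ∈ l := by
  obtain ⟨h1, h2⟩ := List.mem_getLast?_eq_getLast (x := x) (by rw [h]; rfl)
  rw [h2]
  exact List.getLast_mem h1

end Plans
namespace Stmt3

variable {m n : ℕ} (S : Fin n → Finset (Fin m))

section AvailFacts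

variable {k : ℕ}

theorem avail_pass_out (hk : 0 < k) (i : Fin n) :
    schedAvail (blocks S k) ctr (pt i.succ) (st S i) :=
  (avail_iff S hk _ _ _).mpr (Or.inl ⟨i, Or.inl rfl, Or.inl ⟨rfl, rfl⟩⟩)

theorem avail_pass_ret (hk : 0 < k) (i : Fin n) :
    schedAvail (blocks S k) (pt i.succ) ctr (st S i + (2 * (S i).card + 1)) :=
  (avail_iff S hk _ _ _).mpr (Or.inl ⟨i, Or.inr rfl, Or.inr ⟨rfl, rfl⟩⟩)

theorem avail_take_out (hk : 0 < k) (i : Fin n) {j : Fin m} (hj : j ∈ S i) {s : ℕ}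
    (h1 : st S i + 1 ≤ s) (h2 : s ≤ st S i + 2 * (S i).card) :
    schedAvail (blocks S k) ctr (elt j) s :=
  (avail_iff S hk _ _ _).mpr (Or.inr (Or.inl ⟨i, h1, h2, Or.inl ⟨rfl, j, hj, rfl⟩⟩))

theorem avail_take_ret (hk : 0 < k) (i : Fin n) {j : Fin m} (hj : j ∈ S i) {s : ℕ}
    (h1 : st S i + 1 ≤ s) (h2 : s ≤ st S i + 2 * (S i).card) :
    schedAvail (blocks S k) (elt j) ctr s :=
  (avail_iff S hk _ _ _).mpr (Or.inr (Or.inl ⟨i, h1, h2, Or.inr ⟨rfl, j, hj, rfl⟩⟩))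

theorem avail_check_out (hk : 0 < k) : schedAvail (blocks S k) ctr (pt 0) (st S n) :=
  (avail_iff S hk _ _ _).mpr (Or.inr (Or.inr (Or.inl ⟨Or.inl rfl, Or.inl ⟨rfl, rfl⟩⟩)))

theorem avail_check_ret (hk : 0 < k) : schedAvail (blocks S k) (pt 0) ctr (st S n + 1) :=
  (avail_iff S hk _ _ _).mpr (Or.inr (Or.inr (Or.inl ⟨Or.inr rfl, Or.inr ⟨rfl, rfl⟩⟩)))

theorem avail_fin_out (hk : 0 < k) (i : Fin n) {s : ℕ} (h1 : st S n + 2 ≤ s) (h2 : s ≤ st S n + 2 * k) :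
    schedAvail (blocks S k) ctr (pt i.succ) s :=
  (avail_iff S hk _ _ _).mpr (Or.inr (Or.inr (Or.inr ⟨h1, h2, Or.inl ⟨rfl, i, rfl⟩⟩)))

theorem avail_fin_ret (hk : 0 < k) (i : Fin n) {s : ℕ} (h1 : st S n + 2 ≤ s) (h2 : s ≤ st S n + 2 * k) :
    schedAvail (blocks S k) (pt i.succ) ctr s :=
  (avail_iff S hk _ _ _).mpr (Or.inr (Or.inr (Or.inr ⟨h1, h2, Or.inr ⟨rfl, i, rfl⟩⟩)))

end AvailFacts

/-- Plan for block `i`: take all elements of `S i` if `i` is in the cover, otherwise make the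
pass round trip to `p_{i+1}`. -/
noncomputable def bpD (I : Finset (Fin n)) (i : Fin n) : List (SV m n × ℕ × ℕ) :=
  if i ∈ I then tripsAux elt (S i).toList (st S i + 1)
  else [(pt i.succ, st S i, st S i + (2 * (S i).card + 1))]

/-- The full plan: all blocks, then the check trip, then the finish trips. -/
noncomputable def planD (I : Finset (Fin n)) : List (SV m n × ℕ × ℕ) :=
  ((List.finRange n).flatMap (bpD S I)) ++
    ((pt 0, st S n, st S n + 1) :: tripsAux (fun i : Fin n => pt i.succ) I.toList (st S n + 2))

variable (I : Finset (Fin n))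

theorem bpD_bounds (i : Fin n) : ∀ q ∈ bpD S I i,
    st S i ≤ q.2.1 ∧ q.2.1 + 1 ≤ q.2.2 ∧ q.2.2 ≤ st S i + (2 * (S i).card + 1) := by
  intro q hq
  rw [bpD] at hq
  split_ifs at hq with hi
  · obtain ⟨_, h2, h3, h4⟩ := mem_tripsAux hq
    rw [Finset.length_toList] at h4
    omega
  · rw [List.mem_singleton] at hq
    subst hq
    refine ⟨le_rfl, ?_, le_rfl⟩
    show st S i + 1 ≤ st S i + (2 * (S i).card + 1)
    omega

theorem bpD_pairwise (i : Fin n) :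
    (bpD S I i).Pairwise fun q q' => q.2.2 + 1 ≤ q'.2.1 := by
  rw [bpD]
  split_ifs with hi
  · exact tripsAux_pairwise _ _
  · simp

theorem bpD_adj (i : Fin n) : ∀ q ∈ bpD S I i, (starG m n).Adj ctr q.1 := by
  intro q hq
  rw [bpD] at hq
  split_ifs at hq with hi
  · obtain ⟨⟨a, _, h1⟩, _⟩ := mem_tripsAux hq
    rw [h1]
    exact adj_iff.mpr ⟨by simp [ctr, elt], Or.inl rfl⟩
  · rw [List.mem_singleton] at hq
    subst hq
    exact adj_iff.mpr ⟨by simp [ctr, pt], Or.inl rfl⟩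

theorem bpD_avail_out {k : ℕ} (hk : 0 < k) (i : Fin n) :
    ∀ q ∈ bpD S I i, schedAvail (blocks S k) ctr q.1 q.2.1 := by
  intro q hq
  rw [bpD] at hq
  split_ifs at hq with hi
  · obtain ⟨⟨a, ha, h1⟩, h2, h3, h4⟩ := mem_tripsAux hq
    rw [Finset.length_toList] at h4
    rw [h1]
    exact avail_take_out S hk i (Finset.mem_toList.mp ha) (by omega) (by omega)
  · rw [List.mem_singleton] at hq
    subst hq
    exact avail_pass_out S hk i

theorem bpD_avail_ret {k : ℕ} (hk : 0 < k) (i : Fin n) :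
    ∀ q ∈ bpD S I i, schedAvail (blocks S k) q.1 ctr q.2.2 := by
  intro q hq
  rw [bpD] at hq
  split_ifs at hq with hi
  · obtain ⟨⟨a, ha, h1⟩, h2, h3, h4⟩ := mem_tripsAux hq
    rw [Finset.length_toList] at h4
    rw [h1]
    exact avail_take_ret S hk i (Finset.mem_toList.mp ha) (by omega) (by omega)
  · rw [List.mem_singleton] at hq
    subst hq
    exact avail_pass_ret S hk i

theorem planD_bounds1 : ∀ q ∈ planD S I, q.2.1 + 1 ≤ q.2.2 := by
  intro q hq
  rw [planD, List.mem_append] at hq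
  rcases hq with hq | hq
  · obtain ⟨i, _, hqi⟩ := List.mem_flatMap.mp hq
    exact (bpD_bounds S I i q hqi).2.1
  · rcases List.mem_cons.mp hq with rfl | hq
    · simp
    · obtain ⟨_, _, h3, _⟩ := mem_tripsAux hq
      omega

theorem planD_pairwise : (planD S I).Pairwise fun q q' => q.2.2 + 1 ≤ q'.2.1 := by
  rw [planD, List.pairwise_append]
  refine ⟨?_, ?_, ?_⟩
  · rw [List.pairwise_flatMap]
    refine ⟨fun i _ => bpD_pairwise S I i, ?_⟩
    refine (List.pairwise_lt_finRange n).imp ?_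
    intro i i' hii' x hx y hy
    have hb1 := (bpD_bounds S I i x hx).2.2
    have hb2 := (bpD_bounds S I i' y hy).1
    have hcoe := st_coe S i
    have hmono : st S ((i : ℕ) + 1) ≤ st S i' := st_mono (by exact_mod_cast hii')
    omega
  · rw [List.pairwise_cons]
    constructor
    · intro q hq
      have := (mem_tripsAux hq).2.1
      simp only
      omega
    · exact tripsAux_pairwise _ _
  · intro x hx y hy
    obtain ⟨i, _, hxi⟩ := List.mem_flatMap.mp hx
    have hb1 := (bpD_bounds S I i x hxi).2.2
    have hcoe := st_coe S i
    have hmono : st S ((i : ℕ) + 1) ≤ st S n := st_mono (by omega)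
    rcases List.mem_cons.mp hy with rfl | hy
    · simp only
      omega
    · have := (mem_tripsAux hy).2.1
      omega

theorem planD_adj : ∀ q ∈ planD S I, (starG m n).Adj ctr q.1 := by
  intro q hq
  rw [planD, List.mem_append] at hq
  rcases hq with hq | hq
  · obtain ⟨i, _, hqi⟩ := List.mem_flatMap.mp hq
    exact bpD_adj S I i q hqi
  · rcases List.mem_cons.mp hq with rfl | hq
    · exact adj_iff.mpr ⟨by simp [ctr, pt], Or.inl rfl⟩
    · obtain ⟨⟨a, _, h1⟩, _⟩ := mem_tripsAux hq
      rw [h1]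
      exact adj_iff.mpr ⟨by simp [ctr, pt], Or.inl rfl⟩

theorem planD_avail_out {k : ℕ} (hk : 0 < k) (hIk : I.card ≤ k) :
    ∀ q ∈ planD S I, schedAvail (blocks S k) ctr q.1 q.2.1 := by
  intro q hq
  rw [planD, List.mem_append] at hq
  rcases hq with hq | hq
  · obtain ⟨i, _, hqi⟩ := List.mem_flatMap.mp hq
    exact bpD_avail_out S I hk i q hqi
  · rcases List.mem_cons.mp hq with rfl | hq
    · exact avail_check_out S hk
    · obtain ⟨⟨a, _, h1⟩, h2, h3, h4⟩ := mem_tripsAux hq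
      rw [Finset.length_toList] at h4
      rw [h1]
      exact avail_fin_out S hk a h2 (by omega)

theorem planD_avail_ret {k : ℕ} (hk : 0 < k) (hIk : I.card ≤ k) :
    ∀ q ∈ (planD S I).dropLast, schedAvail (blocks S k) q.1 ctr q.2.2 := by
  intro q hq
  rw [planD, List.dropLast_append_cons] at hq
  rw [List.mem_append] at hq
  rcases hq with hq | hq
  · obtain ⟨i, _, hqi⟩ := List.mem_flatMap.mp hq
    exact bpD_avail_ret S I hk i q hqi
  · cases htr : tripsAux (fun i : Fin n => pt i.succ) I.toList (st S n + 2) with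
    | nil => rw [htr] at hq; simp at hq
    | cons b r =>
      rw [htr, List.dropLast_cons_of_ne_nil (List.cons_ne_nil _ _), List.mem_cons] at hq
      rcases hq with rfl | hq
      · exact avail_check_ret S hk
      · rw [← htr] at hq
        have hub := tripsAux_dropLast hq
        rw [Finset.length_toList] at hub
        have hmem := mem_tripsAux (List.mem_of_mem_dropLast hq)
        obtain ⟨⟨a, _, h1⟩, h2, h3, _⟩ := hmem
        rw [h1]
        exact avail_fin_ret S hk a (s := q.2.2) (by omega) (by omega)

theorem planD_visits_pt0 : ∃ q ∈ planD S I, q.1 = pt 0 := by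
  refine ⟨(pt 0, st S n, st S n + 1), ?_, rfl⟩
  rw [planD, List.mem_append]
  exact Or.inr (List.mem_cons_self)

theorem planD_visits_pt (i : Fin n) : ∃ q ∈ planD S I, q.1 = pt i.succ := by
  by_cases hi : i ∈ I
  · obtain ⟨q, hq, h1⟩ := tripsAux_visits (f := fun i : Fin n => pt (m := m) i.succ)
      (t := st S n + 2) (Finset.mem_toList.mpr hi)
    refine ⟨q, ?_, h1⟩
    rw [planD, List.mem_append]
    exact Or.inr (List.mem_cons_of_mem _ hq)
  · refine ⟨(pt i.succ, st S i, st S i + (2 * (S i).card + 1)), ?_, rfl⟩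
    rw [planD, List.mem_append]
    refine Or.inl (List.mem_flatMap.mpr ⟨i, List.mem_finRange i, ?_⟩)
    rw [bpD, if_neg hi]
    exact List.mem_singleton.mpr rfl

theorem planD_visits_elt (hcov : ∀ j : Fin m, ∃ i ∈ I, j ∈ S i) (j : Fin m) :
    ∃ q ∈ planD S I, q.1 = elt j := by
  obtain ⟨i, hi, hj⟩ := hcov j
  obtain ⟨q, hq, h1⟩ := tripsAux_visits (f := elt (m := m) (n := n))
    (t := st S i + 1) (Finset.mem_toList.mpr hj)
  refine ⟨q, ?_, h1⟩
  rw [planD, List.mem_append]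
  refine Or.inl (List.mem_flatMap.mpr ⟨i, List.mem_finRange i, ?_⟩)
  rw [bpD, if_pos hi]
  exact hq

theorem backward {k : ℕ} (hk : 0 < k) (hIk : I.card ≤ k)
    (hcov : ∀ j : Fin m, ∃ i ∈ I, j ∈ S i) :
    ∃ J, (𝒢 S k).IsCoveringFrom J ctr ∧
      arrival J 0 ≤ 2 * n + 2 * (∑ i, (S i).card) + 2 * k + 1 := by
  classical
  refine ⟨(planJ ctr (planD S I)).dropLast, ⟨⟨?_, ?_⟩, ?_, ?_⟩, ?_⟩
  · -- steps are valid
    intro x hx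
    rcases planJ_dropLast_mem _ hx with ⟨q, hq, rfl⟩ | ⟨q, hq, rfl⟩
    · exact ⟨planD_adj S I q hq, planD_avail_out S I hk hIk q hq⟩
    · have hq' := List.mem_of_mem_dropLast hq
      exact ⟨(planD_adj S I q hq').symm, planD_avail_ret S I hk hIk q hq⟩
  · -- chain
    exact (planJ_chain (planD_bounds1 S I) (planD_pairwise S I)).prefix (List.dropLast_prefix _)
  · -- starts at the center
    exact planJ_dropLast_starts
  · -- visits everything
    intro v
    match v with
    | Sum.inl () => exact Or.inl rfl
    | Sum.inr (Sum.inl j) =>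
      obtain ⟨q, hq, h1⟩ := planD_visits_elt S I hcov j
      exact Or.inr ⟨(ctr, q.1, q.2.1), planJ_dropLast_out q hq, h1⟩
    | Sum.inr (Sum.inr i2) =>
      refine Fin.cases ?_ ?_ i2
      · obtain ⟨q, hq, h1⟩ := planD_visits_pt0 S I
        exact Or.inr ⟨(ctr, q.1, q.2.1), planJ_dropLast_out q hq, h1⟩
      · intro i
        obtain ⟨q, hq, h1⟩ := planD_visits_pt S I i
        exact Or.inr ⟨(ctr, q.1, q.2.1), planJ_dropLast_out q hq, h1⟩
  · -- arrival bound
    cases hJl : ((planJ ctr (planD S I)).dropLast).getLast? with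
    | none => simp [arrival, hJl]
    | some x =>
      have hxJ := mem_of_getLast? hJl
      have hav : schedAvail (blocks S k) x.1 x.2.1 x.2.2 := by
        rcases planJ_dropLast_mem _ hxJ with ⟨q, hq, rfl⟩ | ⟨q, hq, rfl⟩
        · exact planD_avail_out S I hk hIk q hq
        · exact planD_avail_ret S I hk hIk q hq
      have hlt := avail_lt_D S hk hav
      rw [st_n S] at hlt
      simp only [arrival, hJl, Option.elim]
      omega

end Stmt3

open Stmt3 in
/-- The star TVG built from a set-cover instance admits a journey from
the center at time `0` covering all vertices by time `D = 2n + 2·Σ|s_i| + 2k + 1` iff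
the family contains a cover of `{1,…,m}` of size at most `k`. -/
theorem star_setCover_reduction (m n k : ℕ) (hk : 0 < k) (S : Fin n → Finset (Fin m)) :
    (∃ J, (𝒢 S k).IsCoveringFrom J ctr ∧
        arrival J 0 ≤ 2 * n + 2 * (∑ i, (S i).card) + 2 * k + 1) ↔
      ∃ I : Finset (Fin n), I.card ≤ k ∧ ∀ j : Fin m, ∃ i ∈ I, j ∈ S i := by
  constructor
  · rintro ⟨J, hJ, -⟩
    exact forward hk S J hJ
  · rintro ⟨I, hIk, hcov⟩
    exact backward S I hk hIk hcov
end

section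
/- Let G be a graph on an even number n of vertices v_0,…,v_{n−1}, and construct G' by adding n new vertices c_0,…,c_{n−1} together with the edges (v_i,c_i), (v_i,c_{i+1}), and (c_i,c_{i+1}) for all i, indices taken mod n. Define a TVG 𝒢 with underlying graph G' and period p = 2 by assigning each edge one of three types: type 11 (available at all times) to every original edge of G; to (v_i,c_i), type 01 (available exactly at odd times) if i is even and type 10 (available exactly at even times) if i is odd; to (v_i,c_{i+1}), type 10 if i is even and type 01 if i is odd; and to (c_i,c_{i+1}), type 10 if i is even and type 01 if i is odd. Then there exists a journey starting at v_0 at time 0 that visits every vertex of G' and arrives by time 2n − 1 if and only if G has a Hamiltonian path starting at v_0. -/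
open TVG

namespace Stmt6

variable {n : ℕ} [NeZero n]

/-- Vertices of `G'`: the original vertices `v_0,…,v_{n-1}` (left) and the new vertices
`c_0,…,c_{n-1}` (right). -/
abbrev V' (n : ℕ) := Fin n ⊕ Fin n

/-- The base edge relation of `G'`: the edges of `G`, plus `(v_i,c_i)`, `(v_i,c_{i+1})`
and `(c_i,c_{i+1})` for all `i` (indices mod `n`). -/
def rel (G : SimpleGraph (Fin n)) : V' n → V' n → Prop
  | .inl i, .inl j => G.Adj i j
  | .inl i, .inr j => j = i ∨ j = i + 1
  | .inr i, .inr j => j = i + 1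
  | _, _ => False

/-- The graph `G'` built from `G`. -/
def G' (G : SimpleGraph (Fin n)) : SimpleGraph (V' n) := SimpleGraph.fromRel (rel G)

/-- The presence function (one direction): original edges have type `11` (always
available); `(v_i,c_i)` has type `01` (odd times) for even `i` and `10` (even times)
for odd `i`; `(v_i,c_{i+1})` and `(c_i,c_{i+1})` have type `10` for even `i` and `01`
for odd `i`. -/
def avail0 (G : SimpleGraph (Fin n)) : V' n → V' n → ℕ → Prop
  | .inl i, .inl j, _ => G.Adj i j
  | .inl i, .inr j, t =>
      (j = i ∧ (if Even i.val then Odd t else Even t)) ∨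
      (j = i + 1 ∧ (if Even i.val then Even t else Odd t))
  | .inr i, .inr j, t => j = i + 1 ∧ (if Even i.val then Even t else Odd t)
  | _, _, _ => False

/-- The TVG of the reduction (period `2`). -/
def 𝒢 (G : SimpleGraph (Fin n)) : TVG (V' n) :=
  ⟨G' G, fun u v t => avail0 G u v t ∨ avail0 G v u t⟩

end Stmt6



namespace TVGAux

lemma list_nodup_of_card (α : Type) [DecidableEq α] (l : List α)
    (h : l.toFinset.card = l.length) : l.Nodup := by
  have := (Multiset.toFinset_card_eq_card_iff_nodup (m := (↑l : Multiset α))).mp (by simpa using h)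
  simpa using this

lemma iteEE {a t : ℕ} : (if Even a then Even t else Odd t) ↔ t % 2 = a % 2 := by
  rcases Nat.even_or_odd a with h | h
  · have ha := Nat.even_iff.mp h
    rw [if_pos h, Nat.even_iff]; omega
  · have ha := Nat.odd_iff.mp h
    rw [if_neg (Nat.not_even_iff_odd.mpr h), Nat.odd_iff]; omega

lemma iteOE {a t : ℕ} : (if Even a then Odd t else Even t) ↔ t % 2 ≠ a % 2 := by
  rcases Nat.even_or_odd a with h | h
  · have ha := Nat.even_iff.mp h
    rw [if_pos h, Nat.odd_iff]; omega
  · have ha := Nat.odd_iff.mp h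
    rw [if_neg (Nat.not_even_iff_odd.mpr h), Nat.even_iff]; omega

lemma fin_add_val_mod {n : ℕ} (hn : 2 ∣ n) (a b : Fin n) :
    ((a + b : Fin n) : ℕ) % 2 = (a.val + b.val) % 2 := by
  rw [Fin.add_def]; exact Nat.mod_mod_of_dvd _ hn

lemma fin_succ_val_mod {n : ℕ} [NeZero n] (hn : 2 ∣ n) (a : Fin n) :
    ((a + 1 : Fin n) : ℕ) % 2 = (a.val + 1) % 2 := by
  have h2 : 2 ≤ n := Nat.le_of_dvd (Nat.pos_of_ne_zero (NeZero.ne n)) hn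
  have : ((1 : Fin n) : ℕ) = 1 := by
    rw [Fin.val_one']; exact Nat.mod_eq_of_lt h2
  rw [fin_add_val_mod hn, this]

/-- Build a walk from a function with adjacent consecutive values. -/
lemma walk_of_fn {α : Type} (G : SimpleGraph α) (f : ℕ → α) :
    ∀ k, (∀ i < k, G.Adj (f i) (f (i + 1))) →
      ∃ P : G.Walk (f 0) (f k), P.support = (List.range (k + 1)).map f := by
  intro k
  induction k with
  | zero => exact fun _ => ⟨.nil, by simp [List.range_succ]⟩
  | succ k ih =>
    intro h
    obtain ⟨P, hP⟩ := ih (fun i hi => h i (by omega))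
    refine ⟨P.concat (h k (by omega)), ?_⟩
    rw [SimpleGraph.Walk.support_concat, hP, ← List.map_singleton (f := f),
      ← List.map_append, ← List.range_succ]

end TVGAux

namespace TVGAux
open Stmt6

variable {n : ℕ} [NeZero n] {G : SimpleGraph (Fin n)}

lemma fin_add_one_ne {n : ℕ} [NeZero n] (h2 : 2 ≤ n) (a : Fin n) : a + 1 ≠ a := by
  intro h
  have h1 : a + 1 = a + 0 := by rw [h, add_zero]
  have h0 : (1 : Fin n) = 0 := add_left_cancel h1
  have := congrArg Fin.val h0
  rw [Fin.val_one', Nat.mod_eq_of_lt h2] at this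
  simp at this

lemma avail_ll {i j : Fin n} {t : ℕ} (h : (𝒢 G).avail (.inl i) (.inl j) t) : G.Adj i j := by
  rcases h with h | h
  · exact h
  · exact (show G.Adj j i from h).symm

lemma avail_lr (hn : 2 ∣ n) {i m : Fin n} {t : ℕ}
    (h : (𝒢 G).avail (.inl i) (.inr m) t) :
    t % 2 ≠ m.val % 2 ∧ (m = i ∨ m = i + 1) := by
  rcases h with h | h
  · rcases h with ⟨rfl, h⟩ | ⟨rfl, h⟩
    · exact ⟨iteOE.mp h, Or.inl rfl⟩
    · rw [iteEE] at h
      refine ⟨?_, Or.inr rfl⟩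
      rw [fin_succ_val_mod hn]; omega
  · exact absurd h id

lemma avail_rl (hn : 2 ∣ n) {m j : Fin n} {t : ℕ}
    (h : (𝒢 G).avail (.inr m) (.inl j) t) :
    t % 2 ≠ m.val % 2 ∧ (m = j ∨ m = j + 1) :=
  avail_lr hn (G := G) (i := j) (m := m) (Or.symm h)

lemma avail_rr (hn : 2 ∣ n) {a m : Fin n} {t : ℕ}
    (h : (𝒢 G).avail (.inr a) (.inr m) t) :
    (m = a + 1 ∧ t % 2 = a.val % 2) ∨ (a = m + 1 ∧ t % 2 = m.val % 2) := by
  rcases h with ⟨rfl, h⟩ | ⟨rfl, h⟩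
  · exact Or.inl ⟨rfl, iteEE.mp h⟩
  · exact Or.inr ⟨rfl, iteEE.mp h⟩

end TVGAux

open TVGAux in
open Fin.NatCast in
open Stmt6 in
/-- For `G` on an even number `n` of vertices, the period-`2` TVG on
`G'` admits a journey from `v_0` at time `0` covering all vertices by time `2n - 1` iff
`G` has a Hamiltonian path starting at `v_0`. -/
theorem period_two_hamPath_reduction (n : ℕ) [NeZero n] (hn : Even n)
    (G : SimpleGraph (Fin n)) :
    (∃ J, (𝒢 G).IsCoveringFrom J (Sum.inl 0) ∧ arrival J 0 ≤ 2 * n - 1) ↔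
      ∃ (w : Fin n) (P : G.Walk 0 w), P.IsHamiltonian := by
  have hn2 : 2 ∣ n := hn.two_dvd
  have hnpos : 0 < n := Nat.pos_of_ne_zero (NeZero.ne n)
  have hn2' : 2 ≤ n := Nat.le_of_dvd hnpos hn2
  constructor
  · -- forward direction
    rintro ⟨J, ⟨⟨hav, hch⟩, hstart, hcover⟩, harr⟩
    classical
    set L := J.length with hLdef
    set d0 : TVG.Step (V' n) := (Sum.inl 0, Sum.inl 0, 0) with hd0
    set g : ℕ → TVG.Step (V' n) := fun i => J.getD i d0 with hg
    have hgget : ∀ i (h : i < L), g i = J[i]'(h) := fun i h => List.getD_eq_getElem _ _ h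
    have hgmem : ∀ i, i < L → g i ∈ J := by
      intro i h
      rw [hgget i h]
      exact List.getElem_mem _
    have hstep : ∀ i, i < L →
        (𝒢 G).G.Adj (g i).1 (g i).2.1 ∧ (𝒢 G).avail (g i).1 (g i).2.1 (g i).2.2 :=
      fun i h => hav _ (hgmem i h)
    have hchain : ∀ i, i + 1 < L →
        (g (i + 1)).1 = (g i).2.1 ∧ (g i).2.2 + 1 ≤ (g (i + 1)).2.2 := by
      intro i h
      have := List.isChain_iff_getElem.mp hch i (by omega)
      rw [← hgget i (by omega),
        ← hgget (i + 1) (by omega)] at this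
      exact this
    -- time lower bounds
    have ht_lb : ∀ d i, i + d < L → (g i).2.2 + d ≤ (g (i + d)).2.2 := by
      intro d
      induction d with
      | zero => intro i _; simp
      | succ d ih =>
        intro i h
        have h1 := ih i (by omega)
        have h2 := (hchain (i + d) (by omega)).2
        rw [show i + (d + 1) = i + d + 1 by omega]
        omega
    -- coverage gives cardinality bounds
    set E : List (V' n) := J.map (fun x => x.2.1) with hE
    have hElen : E.length = L := by rw [hE]; simp [hLdef]
    have hEcover : ∀ v : V' n, v ≠ Sum.inl 0 → v ∈ E := by
      intro v hv
      rcases hcover v with h | ⟨x, hx, hx2⟩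
      · exact absurd h hv
      · rw [hE, List.mem_map]; exact ⟨x, hx, hx2⟩
    have hsub : (Finset.univ : Finset (V' n)) ⊆ insert (Sum.inl 0) E.toFinset := by
      intro v _
      by_cases hv : v = Sum.inl 0
      · rw [hv]; exact Finset.mem_insert_self _ _
      · exact Finset.mem_insert_of_mem (List.mem_toFinset.mpr (hEcover v hv))
    have hcardV : Fintype.card (V' n) = 2 * n := by
      simp [Fintype.card_sum]
      omega
    have hcard1 : 2 * n ≤ E.toFinset.card + 1 := by
      have h1 := Finset.card_le_card hsub
      have h2 := Finset.card_insert_le (Sum.inl 0) E.toFinset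
      rw [Finset.card_univ, hcardV] at h1
      omega
    have hcard2 : E.toFinset.card ≤ L := by
      have := E.toFinset_card_le
      omega
    have hLge : 2 * n - 1 ≤ L := by omega
    -- arrival forces rigidity
    have hJne : J ≠ [] := by
      intro hcon
      rw [hcon] at hLdef
      simp at hLdef
      omega
    have harr' : (g (L - 1)).2.2 + 1 ≤ 2 * n - 1 := by
      rw [arrival, List.getLast?_eq_getElem?, List.getElem?_eq_getElem
        (by omega : J.length - 1 < J.length)] at harr
      rw [hgget (L - 1) (by omega)]
      simpa using harr
    have hLle : L = 2 * n - 1 := by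
      have := ht_lb (L - 1) 0 (by omega)
      rw [show 0 + (L - 1) = L - 1 by omega] at this
      omega
    have ht : ∀ i, i < L → (g i).2.2 = i := by
      intro i hi
      have h1 := ht_lb i 0 (by omega)
      rw [show 0 + i = i by omega] at h1
      have h2 := ht_lb (L - 1 - i) i (by omega)
      rw [show i + (L - 1 - i) = L - 1 by omega] at h2
      omega
    -- nodup endpoints
    have hcard3 : E.toFinset.card = L := by
      have h1 := Finset.card_le_card hsub
      have h2 := Finset.card_insert_le (Sum.inl 0) E.toFinset
      rw [Finset.card_univ, hcardV] at h1
      omega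
    have hEnodup : E.Nodup := list_nodup_of_card _ _ (by rw [hcard3, hElen])
    have hE0 : Sum.inl 0 ∉ E := by
      intro hcon
      have : (insert (Sum.inl (0 : Fin n)) E.toFinset).card = E.toFinset.card :=
        Finset.card_insert_of_mem (List.mem_toFinset.mpr hcon)
      have h1 := Finset.card_le_card hsub
      rw [Finset.card_univ, hcardV] at h1
      omega
    have hEget : ∀ i (h : i < L), E[i]'(by omega) = (g i).2.1 := by
      intro i h
      rw [hgget i h]
      simp [hE]
    have hg0 : (g 0).1 = Sum.inl 0 := by
      have h0 : J.head? = some (g 0) := by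
        rw [List.head?_eq_getElem?, List.getElem?_eq_getElem (by omega : 0 < J.length),
          hgget 0 (by omega)]
      exact hstart _ (by rw [h0]; rfl)
    -- the parity invariant: steps starting in the cycle satisfy i ≡ m (mod 2)
    have hinv : ∀ i, i < L → ∀ m : Fin n, (g i).1 = Sum.inr m → i % 2 = m.val % 2 := by
      intro i
      induction i using Nat.strong_induction_on with
      | _ i ih =>
        intro hi m hm
        cases i with
        | zero => rw [hg0] at hm; exact absurd hm (by simp)
        | succ i =>
          have hprev : (g i).2.1 = Sum.inr m := by
            rw [← (hchain i hi).1, hm]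
          have hstepi := hstep i (by omega)
          rw [hprev] at hstepi
          have hti := ht i (by omega)
          match hgi : (g i).1 with
          | Sum.inl a =>
            rw [hgi, hti] at hstepi
            have := (avail_lr hn2 hstepi.2).1
            omega
          | Sum.inr a =>
            have ha := ih i (by omega) (by omega) a hgi
            rw [hgi, hti] at hstepi
            rcases avail_rr hn2 hstepi.2 with ⟨hm1, hm2⟩ | ⟨hm1, hm2⟩
            · rw [hm1, fin_succ_val_mod hn2]
              omega
            · rw [hm1, fin_succ_val_mod hn2] at ha
              omega
    have hend_inr : ∀ i, i < L → ∀ m : Fin n, (g i).2.1 = Sum.inr m →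
        i % 2 ≠ m.val % 2 := by
      intro i hi m hm
      have hstepi := hstep i hi
      have hti := ht i hi
      rw [hm, hti] at hstepi
      match hgi : (g i).1 with
      | Sum.inl a =>
        rw [hgi] at hstepi
        exact (avail_lr hn2 hstepi.2).1
      | Sum.inr a =>
        have ha := hinv i hi a hgi
        rw [hgi] at hstepi
        rcases avail_rr hn2 hstepi.2 with ⟨hm1, hm2⟩ | ⟨hm1, hm2⟩
        · rw [hm1, fin_succ_val_mod hn2]
          omega
        · rw [hm1, fin_succ_val_mod hn2] at ha
          omega
    -- no step exits the cycle
    have hno_exit : ∀ i, i < L → ∀ m : Fin n, (g i).1 = Sum.inr m →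
        ∃ m' : Fin n, (g i).2.1 = Sum.inr m' := by
      intro i hi m hm
      match hgi : (g i).2.1 with
      | Sum.inr m' => exact ⟨m', rfl⟩
      | Sum.inl b =>
        exfalso
        have hstepi := hstep i hi
        have hti := ht i hi
        rw [hm, hgi, hti] at hstepi
        have h1 := (avail_rl hn2 hstepi.2).1
        have h2 := hinv i hi m hm
        omega
    -- once in the cycle, always in the cycle
    have hforward : ∀ i, i < L → (∃ m : Fin n, (g i).2.1 = Sum.inr m) →
        ∀ d, i + d < L → ∃ m : Fin n, (g (i + d)).2.1 = Sum.inr m := by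
      intro i hi h0 d
      induction d with
      | zero => intro _; exact h0
      | succ d ih =>
        intro hd
        obtain ⟨m, hm⟩ := ih (by omega)
        have hmstart : (g (i + d + 1)).1 = Sum.inr m := by
          rw [(hchain (i + d) (by omega)).1, hm]
        rw [show i + (d + 1) = i + d + 1 by omega]
        exact hno_exit (i + d + 1) (by omega) m hmstart
    -- the first n - 1 steps end at original vertices
    have hinl : ∀ i, i < n - 1 → ∃ b : Fin n, (g i).2.1 = Sum.inl b := by
      intro i hi
      by_contra hcon
      push_neg at hcon
      have h0 : ∃ m : Fin n, (g i).2.1 = Sum.inr m := by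
        match hgi : (g i).2.1 with
        | Sum.inl b => exact absurd hgi (hcon b)
        | Sum.inr m => exact ⟨m, rfl⟩
      -- all endpoints from i on are in the cycle: pigeonhole on Fin n
      set el : V' n → Fin n := Sum.elim (fun _ => 0) id with hel
      have hinj : ∀ p ∈ Finset.Ico i L, el (g p).2.1 ∈ (Finset.univ : Finset (Fin n)) :=
        fun p _ => Finset.mem_univ _
      have hinjOn : Set.InjOn (fun p => el (g p).2.1) (Finset.Ico i L) := by
        intro p1 hp1 p2 hp2 hpe
        simp only [Finset.coe_Ico, Set.mem_Ico] at hp1 hp2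
        obtain ⟨m1, hm1⟩ := hforward i (by omega) h0 (p1 - i) (by omega)
        obtain ⟨m2, hm2⟩ := hforward i (by omega) h0 (p2 - i) (by omega)
        rw [show i + (p1 - i) = p1 by omega] at hm1
        rw [show i + (p2 - i) = p2 by omega] at hm2
        have he1 : (g p1).2.1 = (g p2).2.1 := by
          rw [hm1, hm2]
          simp only at hpe
          rw [hm1, hm2, hel] at hpe
          simpa using hpe
        have : E[p1]'(by omega) = E[p2]'(by omega) := by
          rw [hEget p1 (by omega), hEget p2 (by omega), he1]
        exact (hEnodup.getElem_inj_iff).mp this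
      have hcard := Finset.card_le_card_of_injOn _ hinj hinjOn
      rw [Nat.card_Ico, Finset.card_univ, Fintype.card_fin] at hcard
      omega
    -- extract the Hamiltonian path
    set el' : V' n → Fin n := Sum.elim id (fun _ => 0) with hel'
    set f : ℕ → Fin n := fun i => if i = 0 then 0 else el' (g (i - 1)).2.1 with hf
    have hf0 : f 0 = 0 := rfl
    have hgf : ∀ i, i < n - 1 → (g i).2.1 = Sum.inl (f (i + 1)) := by
      intro i hi
      obtain ⟨b, hb⟩ := hinl i hi
      have hfv : f (i + 1) = el' (g i).2.1 := by simp [hf]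
      rw [hfv, hb]
      simp [hel']
    have hstartf : ∀ i, i < n - 1 → (g i).1 = Sum.inl (f i) := by
      intro i hi
      match i with
      | 0 => rw [hg0, hf0]
      | i + 1 =>
        rw [(hchain i (by omega)).1, hgf i (by omega)]
    have hadj : ∀ i, i < n - 1 → G.Adj (f i) (f (i + 1)) := by
      intro i hi
      have hstepi := hstep i (by omega)
      rw [hstartf i hi, hgf i hi] at hstepi
      exact avail_ll hstepi.2
    obtain ⟨P, hPsupp⟩ := walk_of_fn G f (n - 1) hadj
    refine ⟨f (n - 1), P.copy hf0 rfl, ?_⟩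
    intro v
    rw [SimpleGraph.Walk.support_copy, hPsupp, show n - 1 + 1 = n by omega]
    -- the support is nodup and exhaustive
    have hfinj : ∀ i1, i1 < n → ∀ i2, i2 < n → f i1 = f i2 → i1 = i2 := by
      have hfne0 : ∀ i, i < n - 1 → f (i + 1) ≠ 0 := by
        intro i hi hcon
        apply hE0
        have : (g i).2.1 = Sum.inl 0 := by rw [hgf i hi, hcon]
        rw [← this, ← hEget i (by omega)]
        exact List.getElem_mem _
      intro i1 h1 i2 h2 hfe
      cases i1 with
      | zero =>
        cases i2 with
        | zero => rfl
        | succ i2 => exact absurd hfe.symm (hfne0 i2 (by omega))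
      | succ i1 =>
        cases i2 with
        | zero => exact absurd hfe (hfne0 i1 (by omega))
        | succ i2 =>
          have he : E[i1]'(by omega) = E[i2]'(by omega) := by
            rw [hEget i1 (by omega), hEget i2 (by omega), hgf i1 (by omega),
              hgf i2 (by omega), hfe]
          have := (hEnodup.getElem_inj_iff).mp he
          omega
    have hnodup : ((List.range n).map f).Nodup := by
      refine List.Nodup.map_on ?_ List.nodup_range
      intro i1 h1 i2 h2 hfe
      rw [List.mem_range] at h1 h2
      exact hfinj i1 h1 i2 h2 hfe
    have hvmem : v ∈ (List.range n).map f := by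
      have hcards : ((List.range n).map f).toFinset = (Finset.univ : Finset (Fin n)) := by
        apply Finset.eq_univ_of_card
        rw [List.toFinset_card_of_nodup hnodup]
        simp
      rw [← List.mem_toFinset, hcards]
      exact Finset.mem_univ v
    exact List.count_eq_one_of_mem hnodup hvmem

  · -- backward direction
    rintro ⟨w, P, hP⟩
    classical
    set s := P.support with hs
    have hsne : s ≠ [] := P.support_ne_nil
    have hslen : s.length = n := by
      rw [hs, SimpleGraph.Walk.length_support, hP.length_eq, Fintype.card_fin]
      omega
    set f : ℕ → Fin n := fun i => s.getD i 0 with hf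
    have hfget : ∀ i (h : i < n), f i = s[i]'(by omega) := fun i h =>
      List.getD_eq_getElem _ _ (by omega)
    have hf0 : f 0 = 0 := by
      rw [hfget 0 hnpos, ← List.head_eq_getElem hsne]
      exact P.head_support
    have hadj : ∀ i, i + 1 < n → G.Adj (f i) (f (i + 1)) := by
      intro i h
      have hc := List.isChain_iff_getElem.mp P.isChain_adj_support i (by rw [← hs]; omega)
      rw [hfget i (by omega), hfget (i+1) h]
      simpa [List.get_eq_getElem, hs] using hc
    have hmem : ∀ j : Fin n, ∃ i, i < n ∧ f i = j := by
      intro j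
      have hc1 : s.count j = 1 := hP j
      have : j ∈ s := List.count_pos_iff.mp (by omega)
      obtain ⟨i, hi, hij⟩ := List.mem_iff_getElem.mp this
      exact ⟨i, by omega, by rw [hfget i (by omega)]; exact hij⟩
    -- the entry column
    set j : Fin n := f (n - 1) with hj
    set m : Fin n := if Even j.val then j else j + 1 with hm
    have hmeven : m.val % 2 = 0 := by
      rw [hm]
      rcases Nat.even_or_odd j.val with h | h
      · rw [if_pos h]; exact Nat.even_iff.mp h
      · rw [if_neg (Nat.not_even_iff_odd.mpr h), fin_succ_val_mod hn2]
        have := Nat.odd_iff.mp h; omega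
    have hmj : m = j ∨ m = j + 1 := by
      rw [hm]; split <;> [exact Or.inl rfl; exact Or.inr rfl]
    -- positions
    set pos : ℕ → V' n := fun i => if h : i < n then Sum.inl (f i)
      else Sum.inr (m + ((i - n : ℕ) : Fin n)) with hpos
    set J : List (TVG.Step (V' n)) :=
      (List.range (2 * n - 1)).map (fun i => (pos i, pos (i + 1), i)) with hJ
    have hJlen : J.length = 2 * n - 1 := by rw [hJ]; simp
    have hJget : ∀ i (h : i < 2 * n - 1), J[i]'(by omega) = (pos i, pos (i + 1), i) := by
      intro i h
      simp [hJ]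
    have hposn : pos n = Sum.inr m := by
      rw [hpos]
      simp
    have hposc : ∀ k, k < n → pos (n + k) = Sum.inr (m + (k : Fin n)) := by
      intro k hk
      rw [hpos]
      simp only
      rw [dif_neg (by omega), Nat.add_sub_cancel_left]
    have hodd : (n - 1) % 2 = 1 := by
      obtain ⟨c, rfl⟩ := hn2; omega
    -- availability of each step
    have hstep : ∀ i, i < 2 * n - 1 →
        (𝒢 G).G.Adj (pos i) (pos (i + 1)) ∧ (𝒢 G).avail (pos i) (pos (i + 1)) i := by
      intro i hi
      rcases lt_trichotomy i (n - 1) with h | h | h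
      · -- G-edges
        have h1 : pos i = Sum.inl (f i) := by rw [hpos]; simp only; rw [dif_pos (by omega)]
        have h2 : pos (i + 1) = Sum.inl (f (i + 1)) := by
          rw [hpos]; simp only; rw [dif_pos (by omega)]
        have ha : G.Adj (f i) (f (i + 1)) := hadj i (by omega)
        rw [h1, h2]
        constructor
        · rw [show (𝒢 G).G = G' G from rfl, G', SimpleGraph.fromRel_adj]
          exact ⟨by simpa using ha.ne, Or.inl ha⟩
        · exact Or.inl ha
      · -- entry step at time n - 1
        subst h
        have h1 : pos (n - 1) = Sum.inl j := by
          rw [hpos]; simp only; rw [dif_pos (by omega)]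
        have h2 : pos (n - 1 + 1) = Sum.inr m := by rw [show n - 1 + 1 = n by omega, hposn]
        rw [h1, h2]
        have havail : avail0 G (Sum.inl j) (Sum.inr m) (n - 1) := by
          rcases Nat.even_or_odd j.val with hje | hje
          · have hmj' : m = j := by rw [hm, if_pos hje]
            exact Or.inl ⟨hmj', by rw [if_pos hje, Nat.odd_iff, hodd]⟩
          · have hje' := Nat.not_even_iff_odd.mpr hje
            have hmj' : m = j + 1 := by rw [hm, if_neg hje']
            exact Or.inr ⟨hmj', by rw [if_neg hje', Nat.odd_iff, hodd]⟩
        constructor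
        · rw [show (𝒢 G).G = G' G from rfl, G', SimpleGraph.fromRel_adj]
          refine ⟨by simp, Or.inl ?_⟩
          show m = j ∨ m = j + 1
          exact hmj
        · exact Or.inl havail
      · -- cycle steps
        have hk : ∃ k, k < n - 1 ∧ i = n + k := ⟨i - n, by omega, by omega⟩
        obtain ⟨k, hk1, rfl⟩ := hk
        have h1 : pos (n + k) = Sum.inr (m + (k : Fin n)) := hposc k (by omega)
        have h2 : pos (n + k + 1) = Sum.inr (m + (k : Fin n) + 1) := by
          rw [show n + k + 1 = n + (k + 1) by omega, hposc (k + 1) (by omega)]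
          congr 1
          rw [Nat.cast_add, Nat.cast_one, add_assoc]
        rw [h1, h2]
        have hne : m + (k : Fin n) ≠ m + (k : Fin n) + 1 :=
          fun hcon => fin_add_one_ne hn2' _ hcon.symm
        have hpar : (n + k) % 2 = (m + (k : Fin n)).val % 2 := by
          rw [fin_add_val_mod hn2, Fin.val_natCast]
          have h1 : k % n % 2 = k % 2 := Nat.mod_mod_of_dvd k hn2
          obtain ⟨c, hc⟩ := hn2
          omega
        constructor
        · rw [show (𝒢 G).G = G' G from rfl, G', SimpleGraph.fromRel_adj]
          refine ⟨by simpa using hne, Or.inl rfl⟩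
        · exact Or.inl ⟨rfl, iteEE.mpr hpar⟩
    refine ⟨J, ⟨⟨?_, ?_⟩, ?_, ?_⟩, ?_⟩
    · -- edges available
      intro x hx
      rw [hJ, List.mem_map] at hx
      obtain ⟨i, hi, rfl⟩ := hx
      rw [List.mem_range] at hi
      exact hstep i hi
    · -- chain
      apply List.isChain_iff_getElem.mpr
      intro i hi
      rw [hJlen] at hi
      have g1 : J[i]'(by omega) = (pos i, pos (i + 1), i) := hJget i (by omega)
      have g2 : J[i + 1]'(by omega) = (pos (i + 1), pos (i + 2), i + 1) :=
        hJget (i + 1) (by omega)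
      rw [g1, g2]
      exact ⟨rfl, by simp⟩
    · -- starts at inl 0
      intro x hx
      have hne : J ≠ [] := by
        intro hcon
        rw [hcon] at hJlen
        simp at hJlen
        omega
      rw [List.head?_eq_getElem?, List.getElem?_eq_getElem (by omega), Option.mem_some_iff] at hx
      subst hx
      rw [hJget 0 (by omega)]
      show pos 0 = Sum.inl 0
      rw [hpos]; simp only; rw [dif_pos hnpos, hf0]
    · -- covers every vertex
      intro v
      match v with
      | Sum.inl q =>
        obtain ⟨i, hi, rfl⟩ := hmem q
        match i with
        | 0 => exact Or.inl (by rw [hf0])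
        | i + 1 =>
          refine Or.inr ⟨(pos i, pos (i + 1), i), ?_, ?_⟩
          · rw [hJ, List.mem_map]
            exact ⟨i, List.mem_range.mpr (by omega), rfl⟩
          · show pos (i + 1) = Sum.inl (f (i + 1))
            rw [hpos]; simp only; rw [dif_pos hi]
      | Sum.inr q =>
        set k : ℕ := (q - m).val with hkdef
        have hkn : k < n := (q - m).isLt
        refine Or.inr ⟨(pos (n + k - 1), pos (n + k), n + k - 1), ?_, ?_⟩
        · rw [hJ, List.mem_map]
          refine ⟨n + k - 1, List.mem_range.mpr (by omega), ?_⟩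
          rw [show n + k - 1 + 1 = n + k by omega]
        · show pos (n + k) = Sum.inr q
          rw [hposc k hkn, hkdef, Fin.cast_val_eq_self, add_comm, sub_add_cancel]
    · -- arrival
      have hne : 0 < J.length := by omega
      rw [arrival, List.getLast?_eq_getElem?, List.getElem?_eq_getElem (by omega)]
      have h := hJget (J.length - 1) (by omega)
      rw [h]
      simp only [Option.elim_some]
      omega
end

section
/- Let 𝒢 be a TVG in class R whose underlying graph is the cycle v_0 v_1 … v_n v_0, with an agent starting at v_0 at time 0. Then there exists an edge e of the cycle and an optimal solution to DMVP whose underlying walk never traverses e; consequently, the minimal DMVP arrival time on the cycle equals the minimum, over edges e of the cycle, of the minimal DMVP arrival time over the TVG obtained by restricting 𝒢 to the path resulting from deleting e. -/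
open TVG

/-- Minimal arrival time of a covering journey from `s` at time `0`. -/
noncomputable def coverTime {V : Type} (𝒢 : TVG V) (s : V) : ℕ :=
  sInf {t | ∃ J, 𝒢.IsCoveringFrom J s ∧ arrival J 0 = t}

/-- The TVG obtained by deleting the edge `e` (restricting both the underlying graph
and the presence function). -/
def TVG.restrict {V : Type} (𝒢 : TVG V) (e : Sym2 V) : TVG V :=
  ⟨𝒢.G.deleteEdges {e}, fun u v t => 𝒢.avail u v t ∧ s(u, v) ≠ e⟩


namespace TVGAux

open TVG

variable {V : Type}

lemma journey_of_chain (𝒢 : TVG V)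
    (hrec : ∀ u v, 𝒢.G.Adj u v → ∀ t, ∃ t', t < t' ∧ 𝒢.avail u v t') :
    ∀ (l : List V) (u : V) (t : ℕ), List.Chain 𝒢.G.Adj u l →
      ∃ J : List (Step V), 𝒢.IsJourney J ∧ startsAt J u ∧ departsAfter J t ∧
        ∀ v ∈ l, visits J u v
  | [], u, t, _ => ⟨[], ⟨by simp, List.IsChain.nil⟩, by simp [startsAt], by simp [departsAfter], by simp⟩
  | v :: l, u, t, hch => by
    obtain ⟨hadj, hch'⟩ := List.chain_cons.mp hch
    obtain ⟨t', ht', hav⟩ := hrec u v hadj t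
    obtain ⟨J, ⟨hJ1, hJ2⟩, hs, hd, hv⟩ := journey_of_chain 𝒢 hrec l v (t' + 1) hch'
    refine ⟨(u, v, t') :: J, ⟨?_, ?_⟩, ?_, ?_, ?_⟩
    · rintro x hx
      rcases List.mem_cons.mp hx with rfl | hx
      · exact ⟨hadj, hav⟩
      · exact hJ1 x hx
    · unfold List.Chain'
      rw [List.isChain_cons]
      exact ⟨fun y hy => ⟨hs y hy, hd y hy⟩, hJ2⟩
    · intro y hy
      simp only [List.head?_cons, Option.mem_def, Option.some.injEq] at hy
      rw [← hy]
    · intro y hy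
      simp only [List.head?_cons, Option.mem_def, Option.some.injEq] at hy
      rw [← hy]
      exact le_of_lt ht'
    · intro w hw
      rcases List.mem_cons.mp hw with rfl | hw
      · exact Or.inr ⟨(u, w, t'), List.mem_cons_self, rfl⟩
      · rcases hv w hw with rfl | ⟨y, hy, hyw⟩
        · exact Or.inr ⟨(u, w, t'), List.mem_cons_self, rfl⟩
        · exact Or.inr ⟨y, List.mem_cons_of_mem _ hy, hyw⟩

lemma covering_of_chain (𝒢 : TVG V)
    (hrec : ∀ u v, 𝒢.G.Adj u v → ∀ t, ∃ t', t < t' ∧ 𝒢.avail u v t')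
    (u : V) (l : List V) (hch : List.Chain 𝒢.G.Adj u l)
    (hall : ∀ v : V, v = u ∨ v ∈ l) :
    ∃ J, 𝒢.IsCoveringFrom J u := by
  obtain ⟨J, hJ, hs, _, hv⟩ := journey_of_chain 𝒢 hrec l u 0 hch
  exact ⟨J, hJ, hs, fun v => (hall v).elim (fun h => Or.inl h) (fun h => hv v h)⟩

lemma chain_of_fn (r : V → V → Prop) :
    ∀ (k : ℕ) (h : ℕ → V), (∀ i, i < k → r (h i) (h (i + 1))) →
      List.Chain r (h 0) ((List.range k).map (fun i => h (i + 1)))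
  | 0, h, _ => by exact List.Chain.nil
  | (k + 1), h, H => by
    rw [List.range_succ_eq_map]
    simp only [List.map_cons, List.map_map]
    refine List.Chain.cons (H 0 k.succ_pos) ?_
    have := chain_of_fn r k (fun i => h (i + 1)) (fun i hi => H (i + 1) (by omega))
    simpa [Function.comp_def, Nat.add_comm, Nat.add_assoc, Nat.add_left_comm] using this

lemma sources : ∀ (J : List (Step V)), J.Chain' Linked →
    ∀ x ∈ J, some x = J.head? ∨ ∃ y ∈ J.dropLast, y.2.1 = x.1
  | [], _, x, hx => absurd hx List.not_mem_nil
  | a :: J, hch, x, hx => by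
    rcases List.mem_cons.mp hx with rfl | hx
    · exact Or.inl rfl
    · have hJne : J ≠ [] := List.ne_nil_of_mem hx
      obtain ⟨hhd, hch'⟩ := List.isChain_cons.mp hch
      have hdl : (a :: J).dropLast = a :: J.dropLast := by
        cases J with
        | nil => exact absurd rfl hJne
        | cons b l => rfl
      rcases sources J hch' x hx with h | ⟨y, hy, hyx⟩
      · have hlink : Linked a x := hhd x h.symm
        exact Or.inr ⟨a, by rw [hdl]; exact List.mem_cons_self, hlink.1.symm⟩
      · exact Or.inr ⟨y, by rw [hdl]; exact List.mem_cons_of_mem _ hy, hyx⟩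

lemma lift_restrict (𝒢 : TVG V) (e : Sym2 V) (J : List (Step V)) (s : V)
    (h : (𝒢.restrict e).IsCoveringFrom J s) : 𝒢.IsCoveringFrom J s := by
  obtain ⟨⟨h1, h2⟩, hs, hv⟩ := h
  refine ⟨⟨fun x hx => ?_, h2⟩, hs, hv⟩
  obtain ⟨hadj, hav⟩ := h1 x hx
  exact ⟨(SimpleGraph.deleteEdges_adj.mp hadj).1, hav.1⟩

end TVGAux

namespace TVGAux

open Fin.NatCast Fin.CommRing

lemma edge_repr (n : ℕ) (hn : 2 ≤ n) (𝒢 : TVG (Fin (n + 1)))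
    (hG : 𝒢.G = SimpleGraph.cycleGraph (n + 1)) :
    ∀ e ∈ 𝒢.G.edgeSet, ∃ a : Fin (n + 1), e = s(a, a + 1) := by
  have hone : (1 : Fin (n + 1)).val = 1 := by
    rw [Fin.val_one'] ; exact Nat.mod_eq_of_lt (by omega)
  intro e he
  induction e with
  | _ c d =>
    rw [SimpleGraph.mem_edgeSet, hG, SimpleGraph.cycleGraph_adj'] at he
    rcases he with h | h
    · refine ⟨d, ?_⟩
      have : c - d = 1 := Fin.ext (by rw [h, hone])
      have hc : c = d + 1 := by
        rw [← this]; ring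
      rw [hc, Sym2.eq_swap]
    · refine ⟨c, ?_⟩
      have : d - c = 1 := Fin.ext (by rw [h, hone])
      have hd : d = c + 1 := by
        rw [← this]; ring
      rw [hd]

lemma restrict_covering (n : ℕ) (hn : 2 ≤ n) (𝒢 : TVG (Fin (n + 1)))
    (hG : 𝒢.G = SimpleGraph.cycleGraph (n + 1))
    (hrec : ∀ u v, 𝒢.G.Adj u v → ∀ t, ∃ t', t < t' ∧ 𝒢.avail u v t')
    (a : Fin (n + 1)) :
    ∃ J, (𝒢.restrict s(a, a + 1)).IsCoveringFrom J 0 := by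
  have hone : (1 : Fin (n + 1)).val = 1 := by
    rw [Fin.val_one'] ; exact Nat.mod_eq_of_lt (by omega)
  set e : Sym2 (Fin (n + 1)) := s(a, a + 1) with hedef
  set b : Fin (n + 1) := a + 1 with hbdef
  -- recurrence for the restricted TVG
  have hrec' : ∀ u v, (𝒢.restrict e).G.Adj u v → ∀ t,
      ∃ t', t < t' ∧ (𝒢.restrict e).avail u v t' := by
    intro u v hadj t
    obtain ⟨hadj', hne⟩ := SimpleGraph.deleteEdges_adj.mp hadj
    obtain ⟨t', ht', hav⟩ := hrec u v hadj' t
    exact ⟨t', ht', hav, by simpa using hne⟩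
  -- the negative-one fact
  have hnn : ((n : ℕ) : Fin (n + 1)) = -1 := by
    have h0 : ((n + 1 : ℕ) : Fin (n + 1)) = 0 := Fin.natCast_self (n + 1)
    push_cast at h0
    linear_combination h0
  have hcast : ∀ m : ℕ, m < n + 1 → ((m : Fin (n + 1))).val = m := by
    intro m hm
    rw [Fin.val_natCast]; exact Nat.mod_eq_of_lt (by omega)
  -- the consecutive-edge adjacency in the restricted graph
  have hA : ∀ m : ℕ, m < n →
      (𝒢.restrict e).G.Adj (b + (m : Fin (n + 1))) (b + ((m + 1 : ℕ) : Fin (n + 1))) := by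
    intro m hm
    rw [show (𝒢.restrict e).G = 𝒢.G.deleteEdges {e} from rfl, SimpleGraph.deleteEdges_adj, hG]
    constructor
    · rw [SimpleGraph.cycleGraph_adj']
      right
      have : (b + ((m + 1 : ℕ) : Fin (n + 1))) - (b + (m : Fin (n + 1))) = 1 := by
        push_cast
        ring
      rw [this, hone]
    · simp only [Set.mem_singleton_iff, hedef]
      intro heq
      rw [Sym2.eq_iff] at heq
      rcases heq with ⟨h1, h2⟩ | ⟨h1, h2⟩
      · -- b + m = a, with a = b - 1 = b + n
        have hma : (m : Fin (n + 1)) = ((n : ℕ) : Fin (n + 1)) := by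
          rw [hnn]
          have : (m : Fin (n + 1)) = a - b := by
            linear_combination h1
          rw [this, hbdef]; ring
        have := congrArg Fin.val hma
        rw [hcast m (by omega), hcast n (by omega)] at this
        omega
      · -- b + m = a + 1 = b and b + (m+1) = a
        have hm0 : (m : Fin (n + 1)) = 0 := by
          have : b + (m : Fin (n + 1)) = b := by rw [h1, hbdef]
          linear_combination this
        have hm0' : m = 0 := by
          have := congrArg Fin.val hm0
          rw [hcast m (by omega)] at this
          simpa using this
        have hmn : ((m + 1 : ℕ) : Fin (n + 1)) = ((n : ℕ) : Fin (n + 1)) := by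
          rw [hnn]
          have : ((m + 1 : ℕ) : Fin (n + 1)) = a - b := by
            linear_combination h2
          rw [this, hbdef]; ring
        have := congrArg Fin.val hmn
        rw [hcast (m + 1) (by omega), hcast n (by omega)] at this
        omega
  set k0 : ℕ := ((0 : Fin (n + 1)) - b).val with hk0
  have hk0n : k0 < n + 1 := ((0 : Fin (n + 1)) - b).isLt
  set h1 : ℕ → Fin (n + 1) :=
    fun i => b + (((if i ≤ k0 then k0 - i else i - k0 : ℕ)) : Fin (n + 1)) with hh1
  have hup : ∀ i, k0 ≤ i → h1 i = b + ((i - k0 : ℕ) : Fin (n + 1)) := by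
    intro i hi
    rw [hh1]
    by_cases h : i ≤ k0
    · have : i = k0 := le_antisymm h hi
      subst this
      simp
    · simp [h]
  have hzero : h1 0 = 0 := by
    rw [hh1]
    simp only [Nat.le_refl, if_pos (Nat.zero_le k0), Nat.sub_zero]
    rw [hk0, Fin.cast_val_eq_self]
    ring
  have hchain : List.Chain (𝒢.restrict e).G.Adj (h1 0)
      ((List.range (k0 + n)).map (fun i => h1 (i + 1))) := by
    apply chain_of_fn
    intro i hi
    by_cases hik : i + 1 ≤ k0
    · -- going down
      have e1 : h1 i = b + ((k0 - i : ℕ) : Fin (n + 1)) := by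
        rw [hh1]; simp [Nat.le_of_succ_le hik]
      have e2 : h1 (i + 1) = b + ((k0 - (i + 1) : ℕ) : Fin (n + 1)) := by
        rw [hh1]; simp [hik]
      have hm : k0 - i = (k0 - (i + 1)) + 1 := by omega
      rw [e1, e2, hm]
      exact ((hA (k0 - (i + 1)) (by omega)).symm)
    · -- going up
      have e1 : h1 i = b + ((i - k0 : ℕ) : Fin (n + 1)) := hup i (by omega)
      have e2 : h1 (i + 1) = b + ((i + 1 - k0 : ℕ) : Fin (n + 1)) := hup (i + 1) (by omega)
      have hm : i + 1 - k0 = (i - k0) + 1 := by omega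
      rw [e1, e2, hm]
      exact hA (i - k0) (by omega)
  have hall : ∀ v : Fin (n + 1), v = h1 0 ∨
      v ∈ (List.range (k0 + n)).map (fun i => h1 (i + 1)) := by
    intro v
    set m : ℕ := (v - b).val with hm
    have hmv : h1 (k0 + m) = v := by
      have hmn : m < n + 1 := (v - b).isLt
      have : h1 (k0 + m) = b + ((m : ℕ) : Fin (n + 1)) := by
        rw [hup (k0 + m) (by omega)]
        congr 1
        congr 1
        omega
      rw [this, hm, Fin.cast_val_eq_self]
      ring
    rcases Nat.eq_zero_or_pos (k0 + m) with h0 | h0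
    · left; rw [← hmv, h0]
    · right
      rw [List.mem_map]
      refine ⟨k0 + m - 1, List.mem_range.mpr ?_, by rw [show k0 + m - 1 + 1 = k0 + m by omega, hmv]⟩
      have : m < n + 1 := (v - b).isLt
      omega
  have := covering_of_chain (𝒢.restrict e) hrec' (h1 0) _ hchain hall
  rwa [hzero] at this

end TVGAux

open TVGAux

open Fin.NatCast Fin.CommRing

/-- For a TVG of class `R` whose underlying graph is the cycle
`v_0 v_1 … v_n v_0`, with the agent starting at `v_0` at time `0`: some edge `e` of the
cycle admits an optimal solution never traversing `e`; consequently the minimal DMVP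
arrival time equals the minimum over edges `e` of the minimal arrival time over the TVG
restricted to the path obtained by deleting `e`. -/
theorem dmvp_cycle_reduces_to_paths (n : ℕ) (hn : 2 ≤ n) (𝒢 : TVG (Fin (n + 1)))
    (hG : 𝒢.G = SimpleGraph.cycleGraph (n + 1)) (hR : 𝒢.ClassR) :
    (∃ e ∈ 𝒢.G.edgeSet, ∃ J, 𝒢.IsCoveringFrom J 0 ∧
      (∀ J', 𝒢.IsCoveringFrom J' 0 → arrival J 0 ≤ arrival J' 0) ∧
      ∀ x ∈ J, s(x.1, x.2.1) ≠ e) ∧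
    coverTime 𝒢 0 = sInf {t | ∃ e ∈ 𝒢.G.edgeSet, t = coverTime (𝒢.restrict e) 0} := by
  have hrec := hR.2
  have hone : (1 : Fin (n + 1)).val = 1 := by
    rw [Fin.val_one']; exact Nat.mod_eq_of_lt (by omega)
  have hone0 : (1 : Fin (n + 1)) ≠ 0 := by
    intro h
    have := congrArg Fin.val h
    rw [hone] at this
    simp at this
  -- every edge restriction admits a covering journey
  have hres : ∀ a : Fin (n + 1), ∃ J, (𝒢.restrict s(a, a + 1)).IsCoveringFrom J 0 :=
    restrict_covering n hn 𝒢 hG hrec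
  obtain ⟨J0, hJ0r⟩ := hres 0
  have hJ0 : 𝒢.IsCoveringFrom J0 0 := lift_restrict 𝒢 _ J0 0 hJ0r
  set A : Set ℕ := {t | ∃ J, 𝒢.IsCoveringFrom J 0 ∧ arrival J 0 = t} with hA
  have hAne : A.Nonempty := ⟨arrival J0 0, J0, hJ0, rfl⟩
  obtain ⟨JT, hJT, hTarr⟩ := Nat.sInf_mem hAne
  set T := sInf A with hT
  have hopt : ∀ J', 𝒢.IsCoveringFrom J' 0 → T ≤ arrival J' 0 :=
    fun J' h => Nat.sInf_le ⟨J', h, rfl⟩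
  -- JT is nonempty
  have hne : JT ≠ [] := by
    rcases hJT.2.2 1 with h | ⟨x, hx, _⟩
    · exact absurd h hone0
    · exact List.ne_nil_of_mem hx
  set x := JT.getLast hne with hxdef
  have hxmem : x ∈ JT := List.getLast_mem hne
  have hsplit : JT.dropLast ++ [x] = JT := List.dropLast_append_getLast hne
  set K := JT.dropLast with hK
  have harr : arrival JT 0 = x.2.2 + 1 := by
    unfold arrival
    rw [List.getLast?_eq_getLast hne]
    rfl
  have hchJT : JT.Chain' Linked := hJT.1.2
  have hchKsplit : K.Chain' Linked ∧ ∀ y ∈ K.getLast?, Linked y x := by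
    have h' : (K ++ [x]).Chain' Linked := by rw [hsplit]; exact hchJT
    unfold List.Chain' at h'
    rw [List.isChain_append] at h'
    exact ⟨h'.1, fun y hy => h'.2.2 y hy x rfl⟩
  -- freshness of the last vertex
  have hfresh : x.2.1 ≠ 0 ∧ ∀ y ∈ K, y.2.1 ≠ x.2.1 := by
    by_contra hcon
    -- from the negation, K is still covering
    have hKcov : 𝒢.IsCoveringFrom K 0 := by
      have hwit : x.2.1 = 0 ∨ ∃ y ∈ K, y.2.1 = x.2.1 := by
        by_contra h2
        push_neg at h2
        exact hcon ⟨fun h => h2.1 h, fun y hy h => h2.2 y hy h⟩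
      refine ⟨⟨fun z hz => hJT.1.1 z ((List.dropLast_sublist JT).subset hz), hchKsplit.1⟩, ?_, ?_⟩
      · intro z hz
        apply hJT.2.1 z
        have hKne : K ≠ [] := by
          intro h
          rw [h] at hz
          simp at hz
        have : JT.head? = K.head? := by
          conv_lhs => rw [← hsplit]
          rw [List.head?_append]
          cases hKh : K.head? with
          | none => exact absurd (List.head?_eq_none_iff.mp hKh) hKne
          | some w => rfl
        rw [this]
        exact hz
      · intro v
        rcases hJT.2.2 v with h | ⟨z, hz, hzv⟩
        · exact Or.inl h
        · have : z ∈ K ++ [x] := by rw [hsplit]; exact hz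
          rcases List.mem_append.mp this with hzK | hzx
          · exact Or.inr ⟨z, hzK, hzv⟩
          · have hzx' : z = x := by simpa using hzx
            subst hzx'
            rcases hwit with h0 | ⟨y, hy, hyx⟩
            · exact Or.inl (by rw [← hzv, h0])
            · exact Or.inr ⟨y, hy, by rw [hyx, hzv]⟩
    have hKlt : arrival K 0 < T := by
      have hTval : T = x.2.2 + 1 := by rw [← hTarr, harr]
      cases hKl : K.getLast? with
      | none =>
        unfold arrival
        rw [hKl]
        simp only [Option.elim]
        omega
      | some y =>
        have hlink : Linked y x := hchKsplit.2 y hKl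
        unfold arrival
        rw [hKl]
        simp only [Option.elim]
        have := hlink.2
        omega
    exact absurd (hopt K hKcov) (by omega)
  -- the final step's source is adjacent to the fresh vertex
  have hadj_ax : 𝒢.G.Adj x.1 x.2.1 := (hJT.1.1 x hxmem).1
  -- pick the other neighbour b of w := x.2.1
  obtain ⟨b, hb_adj, hb_ne⟩ : ∃ b, 𝒢.G.Adj x.2.1 b ∧ b ≠ x.1 := by
    have h12 : ¬ ((1 : Fin (n + 1)) + 1 = 0) := by
      intro h
      have := congrArg Fin.val h
      rw [Fin.val_add, hone] at this
      have h2 : (1 + 1) % (n + 1) = 2 := Nat.mod_eq_of_lt (by omega)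
      rw [h2] at this
      simp at this
    rw [hG, SimpleGraph.cycleGraph_adj'] at hadj_ax
    rcases hadj_ax with h | h
    · -- x.1 - x.2.1 = 1, so x.1 = x.2.1 + 1; take b = x.2.1 - 1
      have hx1 : x.1 = x.2.1 + 1 := by
        have : x.1 - x.2.1 = 1 := Fin.ext (by rw [h, hone])
        linear_combination this
      refine ⟨x.2.1 - 1, ?_, ?_⟩
      · rw [hG, SimpleGraph.cycleGraph_adj']
        left
        have : x.2.1 - (x.2.1 - 1) = 1 := by ring
        rw [this, hone]
      · intro hb
        rw [hx1] at hb
        apply h12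
        linear_combination -hb
    · -- x.2.1 - x.1 = 1, so x.1 = x.2.1 - 1; take b = x.2.1 + 1
      have hx1 : x.1 = x.2.1 - 1 := by
        have : x.2.1 - x.1 = 1 := Fin.ext (by rw [h, hone])
        linear_combination -this
      refine ⟨x.2.1 + 1, ?_, ?_⟩
      · rw [hG, SimpleGraph.cycleGraph_adj']
        right
        have : (x.2.1 + 1) - x.2.1 = 1 := by ring
        rw [this, hone]
      · intro hb
        rw [hx1] at hb
        apply h12
        linear_combination hb
  have he : s(x.2.1, b) ∈ 𝒢.G.edgeSet := 𝒢.G.mem_edgeSet.mpr hb_adj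
  -- JT avoids the edge s(x.2.1, b)
  have havoid : ∀ y ∈ JT, s(y.1, y.2.1) ≠ s(x.2.1, b) := by
    intro y hy heq
    rw [Sym2.eq_iff] at heq
    have hsrc : y.1 ≠ x.2.1 := by
      rcases sources JT hchJT y hy with h | ⟨z, hz, hzy⟩
      · have h0 : y.1 = 0 := hJT.2.1 y h.symm
        rw [h0]
        exact fun h' => hfresh.1 h'.symm
      · rw [← hzy]
        exact hfresh.2 z hz
    rcases heq with ⟨h1, h2⟩ | ⟨h1, h2⟩
    · exact hsrc h1
    · have : y ∈ K ++ [x] := by rw [hsplit]; exact hy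
      rcases List.mem_append.mp this with hyK | hyx
      · exact hfresh.2 y hyK h2
      · have hyx' : y = x := by simpa using hyx
        subst hyx'
        exact hb_ne h1.symm
  -- part 1
  have hopt' : ∀ J', 𝒢.IsCoveringFrom J' 0 → arrival JT 0 ≤ arrival J' 0 := by
    intro J' h
    rw [hTarr]
    exact hopt J' h
  refine ⟨⟨s(x.2.1, b), he, JT, hJT, hopt', havoid⟩, ?_⟩
  -- part 2
  have hJTres : (𝒢.restrict s(x.2.1, b)).IsCoveringFrom JT 0 := by
    obtain ⟨⟨h1, h2⟩, hs, hv⟩ := hJT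
    refine ⟨⟨fun z hz => ⟨?_, (h1 z hz).2, havoid z hz⟩, h2⟩, hs, hv⟩
    show (𝒢.G.deleteEdges _).Adj _ _
    rw [SimpleGraph.deleteEdges_adj]
    exact ⟨(h1 z hz).1, by simpa using havoid z hz⟩
  have hlift_le : ∀ e' : Sym2 (Fin (n + 1)), (∃ J, (𝒢.restrict e').IsCoveringFrom J 0) →
      T ≤ coverTime (𝒢.restrict e') 0 := by
    intro e' hex
    obtain ⟨J', hJ'⟩ := hex
    have hne2 : {t | ∃ J, (𝒢.restrict e').IsCoveringFrom J 0 ∧ arrival J 0 = t}.Nonempty :=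
      ⟨arrival J' 0, J', hJ', rfl⟩
    obtain ⟨J'', hJ'', hA''⟩ := Nat.sInf_mem hne2
    calc T ≤ arrival J'' 0 := hopt J'' (lift_restrict 𝒢 e' J'' 0 hJ'')
    _ = coverTime (𝒢.restrict e') 0 := hA''
  have hTeq : coverTime (𝒢.restrict s(x.2.1, b)) 0 = T :=
    le_antisymm (Nat.sInf_le ⟨JT, hJTres, hTarr⟩) (hlift_le _ ⟨JT, hJTres⟩)
  have hcT : coverTime 𝒢 0 = T := rfl
  rw [hcT]
  have h1 : sInf {t | ∃ e ∈ 𝒢.G.edgeSet, t = coverTime (𝒢.restrict e) 0} ≤ T :=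
    Nat.sInf_le ⟨s(x.2.1, b), he, hTeq.symm⟩
  have h2 : T ≤ sInf {t | ∃ e ∈ 𝒢.G.edgeSet, t = coverTime (𝒢.restrict e) 0} := by
    have hSne : {t | ∃ e ∈ 𝒢.G.edgeSet, t = coverTime (𝒢.restrict e) 0}.Nonempty :=
      ⟨coverTime (𝒢.restrict s(x.2.1, b)) 0, s(x.2.1, b), he, rfl⟩
    obtain ⟨e2, he2, heq2⟩ := Nat.sInf_mem hSne
    rw [heq2]
    obtain ⟨a, rfl⟩ := edge_repr n hn 𝒢 hG e2 he2
    exact hlift_le _ (hres a)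
  omega
end
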